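/- arXiv:1610.06743 — 5 statements merged into one kernel-verified Lean document; each statement's English description precedes it below -/
import Mathlib

section
/- Discrete maximum principle for the follow-the-leader scheme: for the Cauchy FTL scheme, the solution (xᵢⁿ)_{i=1}^{n−1} satisfies xᵢ₊₁ⁿ(t) − xᵢⁿ(t) ≥ ℓₙ/R for all t ≥ 0 and all i ∈ {1,…,n−2}. In particular the particles strictly preserve their initial order for all times. -/
open MeasureTheory Set Filter Topology
open scoped ENNReal

set_option maxHeartbeats 1000000 in
lemma barrier_aux (c δ0 K : ℝ) (hc : 0 < c) (hδ0 : 0 < δ0) (hK : 0 ≤ K)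
    (g G : ℝ → ℝ)
    (hg : ∀ t, 0 ≤ t → HasDerivWithinAt g (G t) (Set.Ici 0) t)
    (h0 : c ≤ g 0)
    (hb : ∀ t, 0 ≤ t → c - δ0 ≤ g t → g t ≤ c → -(K * (c - g t)) ≤ G t) :
    ∀ t, 0 ≤ t → c ≤ g t := by
  intro t1 ht1
  by_contra hlt
  push_neg at hlt
  have hgc : ContinuousOn g (Set.Ici 0) := fun t ht => (hg t ht).continuousWithinAt
  have ht1pos : 0 < t1 := by
    rcases eq_or_lt_of_le ht1 with h | h
    · exfalso; rw [← h] at hlt; linarith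
    · exact h
  set A : Set ℝ := Icc 0 t1 ∩ g ⁻¹' (Ici c) with hA
  have hAclosed : IsClosed A :=
    ContinuousOn.preimage_isClosed_of_isClosed (hgc.mono (Icc_subset_Ici_self))
      isClosed_Icc isClosed_Ici
  have hAne : A.Nonempty := ⟨0, ⟨le_rfl, le_of_lt ht1pos⟩, h0⟩
  have hAbdd : BddAbove A := ⟨t1, fun t ht => ht.1.2⟩
  set u := sSup A with hu
  have huA : u ∈ A := hAclosed.csSup_mem hAne hAbdd
  have hu0 : 0 ≤ u := huA.1.1
  have hut1 : u ≤ t1 := huA.1.2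
  have hgu_ge : c ≤ g u := huA.2
  have hult1 : u < t1 := by
    rcases eq_or_lt_of_le hut1 with h | h
    · exfalso; rw [h] at hgu_ge; linarith
    · exact h
  have hafter : ∀ t, u < t → t ≤ t1 → g t < c := by
    intro t hut htt1
    by_contra hge
    push_neg at hge
    have : t ∈ A := ⟨⟨le_trans hu0 (le_of_lt hut), htt1⟩, hge⟩
    exact absurd (le_csSup hAbdd this) (not_le.mpr hut)
  have hgu_le : c ≤ g u → g u = c := by
    intro _
    refine le_antisymm ?_ hgu_ge
    have htend : Tendsto g (𝓝[>] u) (𝓝 (g u)) :=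
      (hgc u hu0).mono (fun z hz => le_trans hu0 (le_of_lt hz)) |>.tendsto
    refine le_of_tendsto htend ?_
    filter_upwards [Ioc_mem_nhdsGT_of_mem ⟨le_rfl, hult1⟩] with z hz
    exact le_of_lt (hafter z hz.1 hz.2)
  have hgu : g u = c := hgu_le hgu_ge
  set δ1 := min δ0 (c - g t1) with hδ1def
  have hδ1 : 0 < δ1 := lt_min hδ0 (by linarith)
  have hδ1' : δ1 ≤ δ0 := min_le_left _ _
  set B : Set ℝ := Icc u t1 ∩ g ⁻¹' (Iic (c - δ1)) with hB
  have hBclosed : IsClosed B :=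
    ContinuousOn.preimage_isClosed_of_isClosed
      (hgc.mono (fun z hz => le_trans hu0 hz.1)) isClosed_Icc isClosed_Iic
  have hBne : B.Nonempty := ⟨t1, ⟨le_of_lt hult1, le_rfl⟩, by
    simp only [mem_preimage, mem_Iic]
    have := min_le_right δ0 (c - g t1); linarith⟩
  have hBbdd : BddBelow B := ⟨u, fun t ht => ht.1.1⟩
  set w := sInf B with hw
  have hwB : w ∈ B := hBclosed.csInf_mem hBne hBbdd
  have huw : u ≤ w := hwB.1.1
  have hwt1 : w ≤ t1 := hwB.1.2
  have hgw : g w ≤ c - δ1 := hwB.2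
  have huw' : u < w := by
    rcases eq_or_lt_of_le huw with h | h
    · exfalso; rw [← h] at hgw; rw [hgu] at hgw; linarith
    · exact h
  have hbefore : ∀ t, u ≤ t → t < w → c - δ1 < g t := by
    intro t hut htw
    by_contra hle
    push_neg at hle
    have : t ∈ B := ⟨⟨hut, le_trans (le_of_lt htw) hwt1⟩, hle⟩
    exact absurd (csInf_le hBbdd this) (not_le.mpr htw)
  -- Gronwall on [u, w] for f = c - g
  set f : ℝ → ℝ := fun t => c - g t with hf
  have key : ∀ s ∈ Icc u w, f s ≤ gronwallBound 0 K 0 (s - u) := by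
    refine le_gronwallBound_of_liminf_deriv_right_le
      (f' := fun t => -(G t)) ?_ ?_ ?_ ?_
    · exact (continuous_const.continuousOn.sub
        (hgc.mono (fun z hz => le_trans hu0 hz.1)))
    · intro s hs r hr
      have hds : HasDerivWithinAt f (-(G s)) (Ici s) s := by
        have := (hg s (le_trans hu0 hs.1)).mono (Ici_subset_Ici.mpr (le_trans hu0 hs.1))
        exact this.const_sub c
      exact hds.liminf_right_slope_le hr
    · simp [hf, hgu]
    · intro s hs
      have hs0 : 0 ≤ s := le_trans hu0 hs.1
      have hgs_le : g s ≤ c := by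
        rcases eq_or_lt_of_le hs.1 with h | h
        · rw [← h, hgu]
        · exact le_of_lt (hafter s h (le_trans (le_of_lt hs.2) hwt1))
      have hgs_ge : c - δ0 ≤ g s := by
        have := hbefore s hs.1 hs.2
        linarith
      have := hb s hs0 hgs_ge hgs_le
      simp only [hf]
      linarith
  have := key w ⟨huw, le_rfl⟩
  rw [gronwallBound_ε0_δ0] at this
  simp only [hf] at this
  linarith

set_option maxHeartbeats 1000000 in
lemma atomize (rbar : ℝ → ℝ) (hint : Integrable rbar) (h0r : ∀ y, 0 ≤ rbar y)
    (R ℓ : ℝ) (hRpos : 0 < R) (hℓ : 0 < ℓ)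
    (hae : ∀ᵐ y : ℝ, rbar y ≤ R)
    (L : ℝ) (hL : L = ∫ y, rbar y)
    (n : ℕ) (hn : 3 ≤ n) (hLn : L = n * ℓ)
    (xbar : ℕ → ℝ)
    (hxbar1 : xbar 1 = sSup {y : ℝ | (∫ s in Set.Iio y, rbar s) < ℓ})
    (hxbar : ∀ i, 2 ≤ i → i ≤ n - 1 →
        xbar i = sSup {y : ℝ | (∫ s in Set.Ioc (xbar (i-1)) y, rbar s) < ℓ}) :
    ∀ i, 2 ≤ i → i ≤ n - 1 → xbar (i-1) + ℓ / R ≤ xbar i := by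
  have hiOn : ∀ s : Set ℝ, IntegrableOn rbar s := fun s => hint.integrableOn
  have hnn : ∀ s : Set ℝ, 0 ≤ ∫ y in s, rbar y := fun s => integral_nonneg h0r
  have hmonoS : ∀ {s t : Set ℝ}, s ⊆ t → (∫ y in s, rbar y) ≤ ∫ y in t, rbar y :=
    fun h => setIntegral_mono_set (hiOn _) (Eventually.of_forall h0r) h.eventuallyLE
  have hIocR : ∀ a y : ℝ, a ≤ y → (∫ s in Ioc a y, rbar s) ≤ R * (y - a) := by
    intro a y hay
    have h1 : (∫ s in Ioc a y, rbar s) ≤ ∫ _ in Ioc a y, R :=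
      setIntegral_mono_ae (hiOn _)
        (integrableOn_const measure_Ioc_lt_top.ne) hae
    rw [setIntegral_const, Real.volume_real_Ioc_of_le hay, smul_eq_mul] at h1
    linarith
  have hsmall : ∀ a y : ℝ, y < a + ℓ / R → (∫ s in Ioc a y, rbar s) < ℓ := by
    intro a y h
    rcases le_or_gt y a with h' | h'
    · rw [Ioc_eq_empty (by exact not_lt.mpr h')]
      simpa using hℓ
    · have h1 := hIocR a y h'.le
      have h2 : (y - a) * R < ℓ := (lt_div_iff₀ hRpos).mp (by linarith)
      linarith
  have hcompl : ∀ y : ℝ, (∫ s in Iic y, rbar s) + (∫ s in Ioi y, rbar s) = L := by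
    intro y
    rw [hL, ← integral_add_compl measurableSet_Iic hint, compl_Iic]
  have hlim : ∀ a : ℝ, ℓ < ∫ s in Ioi a, rbar s → ∃ y0, ℓ < ∫ s in Ioc a y0, rbar s := by
    intro a h
    have hmono : Monotone (fun k : ℕ => Ioc a (a + (k:ℝ))) := fun k1 k2 h12 =>
      Ioc_subset_Ioc le_rfl (by exact add_le_add_right (Nat.cast_le.mpr h12) a)
    have hun : ⋃ k : ℕ, Ioc a (a + (k:ℝ)) = Ioi a := by
      ext z
      simp only [mem_iUnion, mem_Ioc, mem_Ioi]
      constructor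
      · rintro ⟨k, hk, _⟩; exact hk
      · intro hz
        obtain ⟨k, hk⟩ := exists_nat_ge (z - a)
        exact ⟨k, hz, by linarith⟩
    have ht := tendsto_setIntegral_of_monotone (fun k : ℕ => measurableSet_Ioc) hmono
      (by rw [hun]; exact hiOn _)
    rw [hun] at ht
    obtain ⟨k, hk⟩ := (ht.eventually (eventually_gt_nhds h)).exists
    exact ⟨a + k, hk⟩
  have hℓL : ℓ < L := by
    have h3 : (3:ℝ) ≤ (n:ℝ) := by exact_mod_cast hn
    nlinarith
  have hlimIic : ∃ y0 : ℝ, ℓ < ∫ s in Iic y0, rbar s := by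
    have hmono : Monotone (fun k : ℕ => Iic (k:ℝ)) := fun k1 k2 h12 =>
      Iic_subset_Iic.mpr (Nat.cast_le.mpr h12)
    have hun : ⋃ k : ℕ, Iic (k:ℝ) = univ := by
      ext z
      simp only [mem_iUnion, mem_Iic, mem_univ, iff_true]
      exact exists_nat_ge z
    have ht := tendsto_setIntegral_of_monotone (fun k : ℕ => measurableSet_Iic) hmono
      (by rw [hun]; exact hiOn _)
    rw [hun] at ht
    have hLval : (∫ s in (univ : Set ℝ), rbar s) = L := by
      rw [hL, Measure.restrict_univ]
    rw [hLval] at ht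
    obtain ⟨k, hk⟩ := (ht.eventually (eventually_gt_nhds hℓL)).exists
    exact ⟨k, hk⟩
  have hlimIic0 : ∃ y0 : ℝ, (∫ s in Iic y0, rbar s) < ℓ := by
    have hmono : Monotone (fun k : ℕ => Ioi (-(k:ℝ))) := fun k1 k2 h12 =>
      Ioi_subset_Ioi (by exact neg_le_neg (Nat.cast_le.mpr h12))
    have hun : ⋃ k : ℕ, Ioi (-(k:ℝ)) = univ := by
      ext z
      simp only [mem_iUnion, mem_Ioi, mem_univ, iff_true]
      obtain ⟨k, hk⟩ := exists_nat_ge (-z)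
      exact ⟨k + 1, by push_cast; linarith⟩
    have ht := tendsto_setIntegral_of_monotone (fun k : ℕ => measurableSet_Ioi) hmono
      (by rw [hun]; exact hiOn _)
    rw [hun] at ht
    have hLval : (∫ s in (univ : Set ℝ), rbar s) = L := by
      rw [hL, Measure.restrict_univ]
    rw [hLval] at ht
    obtain ⟨k, hk⟩ := (ht.eventually (eventually_gt_nhds (by linarith : L - ℓ < L))).exists
    refine ⟨-(k:ℝ), ?_⟩
    have := hcompl (-(k:ℝ))
    linarith
  have hIicLip : ∀ y1 y2 : ℝ, y1 ≤ y2 →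
      (∫ s in Iic y2, rbar s) ≤ (∫ s in Iic y1, rbar s) + R * (y2 - y1) := by
    intro y1 y2 h12
    rw [← Iic_union_Ioc_eq_Iic h12,
      setIntegral_union (Iic_disjoint_Ioc le_rfl) measurableSet_Ioc (hiOn _) (hiOn _)]
    exact add_le_add_right (hIocR _ _ h12) _
  have hIocLip : ∀ a y1 y2 : ℝ, y1 ≤ y2 →
      (∫ s in Ioc a y2, rbar s) ≤ (∫ s in Ioc a y1, rbar s) + R * (y2 - y1) := by
    intro a y1 y2 h12
    have hsub : Ioc a y2 ⊆ Ioc a y1 ∪ Ioc y1 y2 := by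
      intro z hz
      rcases le_or_gt z y1 with h | h
      · exact Or.inl ⟨hz.1, h⟩
      · exact Or.inr ⟨h, hz.2⟩
    calc (∫ s in Ioc a y2, rbar s) ≤ ∫ s in Ioc a y1 ∪ Ioc y1 y2, rbar s := hmonoS hsub
      _ = (∫ s in Ioc a y1, rbar s) + ∫ s in Ioc y1 y2, rbar s :=
        setIntegral_union (Ioc_disjoint_Ioc_of_le le_rfl) measurableSet_Ioc (hiOn _) (hiOn _)
      _ ≤ _ := add_le_add_right (hIocR _ _ h12) _
  have hsup_le : ∀ Φ : ℝ → ℝ, (∀ y1 y2, y1 ≤ y2 → Φ y2 ≤ Φ y1 + R * (y2 - y1)) →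
      ∀ hne : {y | Φ y < ℓ}.Nonempty, BddAbove {y | Φ y < ℓ} →
      Φ (sSup {y | Φ y < ℓ}) ≤ ℓ := by
    intro Φ hlip hne hbdd
    by_contra hgt
    push_neg at hgt
    set u := sSup {y | Φ y < ℓ} with hu
    have hdiv : 0 < (Φ u - ℓ) / R := div_pos (by linarith) hRpos
    obtain ⟨y, hyS, hy⟩ := exists_lt_of_lt_csSup hne
      (show u - (Φ u - ℓ) / R < u by linarith)
    have hyu : y ≤ u := le_csSup hbdd hyS
    have h1 := hlip y u hyu
    have h2 : R * (u - y) ≤ R * ((Φ u - ℓ) / R) :=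
      mul_le_mul_of_nonneg_left (by linarith) hRpos.le
    rw [mul_div_cancel₀ _ (ne_of_gt hRpos)] at h2
    have h3 : Φ y < ℓ := hyS
    linarith
  -- the inductive claim
  have key : ∀ i, 1 ≤ i → i ≤ n - 1 →
      (∫ s in Iic (xbar i), rbar s) ≤ (i : ℝ) * ℓ ∧
      (2 ≤ i → xbar (i-1) + ℓ / R ≤ xbar i) := by
    intro i h1
    induction i, h1 using Nat.le_induction with
    | base =>
      intro _
      constructor
      · have hIio : ∀ y : ℝ, (∫ s in Iio y, rbar s) = ∫ s in Iic y, rbar s :=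
          fun y => setIntegral_congr_set Iio_ae_eq_Iic
        have hset : {y : ℝ | (∫ s in Set.Iio y, rbar s) < ℓ}
            = {y : ℝ | (∫ s in Iic y, rbar s) < ℓ} := by
          ext y; simp [hIio]
        obtain ⟨z0, hz0⟩ := hlimIic0
        obtain ⟨y0, hy0⟩ := hlimIic
        have hne : {y : ℝ | (∫ s in Iic y, rbar s) < ℓ}.Nonempty := ⟨z0, hz0⟩
        have hbdd : BddAbove {y : ℝ | (∫ s in Iic y, rbar s) < ℓ} := by
          refine ⟨y0, fun y hy => ?_⟩
          by_contra hc
          push_neg at hc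
          exact absurd hy (not_lt.mpr (le_trans hy0.le (hmonoS (Iic_subset_Iic.mpr hc.le))))
        have := hsup_le (fun y => ∫ s in Iic y, rbar s) hIicLip hne hbdd
        rw [hxbar1, hset]
        simpa using this
      · intro h2; omega
    | succ i h1 IH =>
      intro h2'
      have h2 : i ≤ n - 1 := by omega
      obtain ⟨hmass_i, _⟩ := IH h2
      set a := xbar i with ha
      have hrem : ℓ < ∫ s in Ioi a, rbar s := by
        have h3 : (i:ℝ) + 2 ≤ (n:ℝ) := by exact_mod_cast (by omega : i + 2 ≤ n)
        have h4 := hcompl a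
        nlinarith
      set Φ : ℝ → ℝ := fun y => ∫ s in Ioc a y, rbar s with hΦ
      have hne : {y | Φ y < ℓ}.Nonempty := ⟨a, by simp [hΦ, Ioc_self, hℓ]⟩
      obtain ⟨y0, hy0⟩ := hlim a hrem
      have hbdd : BddAbove {y | Φ y < ℓ} := by
        refine ⟨y0, fun y hy => ?_⟩
        by_contra hc
        push_neg at hc
        exact absurd hy (not_lt.mpr (le_trans hy0.le
          (hmonoS (Ioc_subset_Ioc le_rfl hc.le))))
      have hx : xbar (i+1) = sSup {y | Φ y < ℓ} := by
        have h5 := hxbar (i+1) (by omega) h2'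
        simpa [hΦ] using h5
      have hgap : a + ℓ / R ≤ xbar (i+1) := by
        rw [hx]
        have hsub : Iio (a + ℓ / R) ⊆ {y | Φ y < ℓ} := fun y hy => hsmall a y hy
        calc a + ℓ / R = sSup (Iio (a + ℓ / R)) := csSup_Iio.symm
          _ ≤ _ := csSup_le_csSup hbdd nonempty_Iio hsub
      refine ⟨?_, fun _ => by simpa using hgap⟩
      have hΦs : Φ (xbar (i+1)) ≤ ℓ := by
        rw [hx]; exact hsup_le Φ (hIocLip a) hne hbdd
      have hale : a ≤ xbar (i+1) :=
        le_trans (le_add_of_nonneg_right (div_nonneg hℓ.le hRpos.le)) hgap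
      have hsplit : (∫ s in Iic (xbar (i+1)), rbar s)
          = (∫ s in Iic a, rbar s) + Φ (xbar (i+1)) := by
        rw [← Iic_union_Ioc_eq_Iic hale,
          setIntegral_union (Iic_disjoint_Ioc le_rfl) measurableSet_Ioc (hiOn _) (hiOn _)]
      rw [hsplit]
      push_cast
      linarith
  intro i h2 h3
  exact (key i (by omega) h3).2 h2
set_option maxHeartbeats 1000000 in
/-- **Discrete maximum principle for the follow-the-leader scheme** (Cauchy problem).
For the Cauchy follow-the-leader scheme the gaps between consecutive particles stay bounded
below by `ℓₙ/R`; in particular the particles strictly preserve their initial order. -/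
theorem stmt1
    -- velocity hypothesis (V1)
    (ρmax vmax : ℝ) (hρmax : 0 < ρmax) (hvmaxpos : 0 < vmax)
    (v v' : ℝ → ℝ)
    (hv_deriv : ∀ r ∈ Set.Icc (0:ℝ) ρmax, HasDerivAt v (v' r) r)
    (hv'_cont : ContinuousOn v' (Set.Icc (0:ℝ) ρmax))
    (hv'_neg : ∀ r ∈ Set.Icc (0:ℝ) ρmax, v' r < 0)
    (hv_range : ∀ r ∈ Set.Icc (0:ℝ) ρmax, v r ∈ Set.Icc (0:ℝ) vmax)
    (hv0 : v 0 = vmax) (hvρmax : v ρmax = 0)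
    -- initial datum (I1)
    (rbar : ℝ → ℝ) (hrbar_int : Integrable rbar)
    (hrbar_range : ∀ y, rbar y ∈ Set.Icc (0:ℝ) ρmax)
    (L R : ℝ) (hL : L = ∫ y, rbar y) (hLpos : 0 < L)
    (hR : eLpNorm rbar ⊤ volume = ENNReal.ofReal R) (hRpos : 0 < R)
    -- atomization of the initial datum
    (n : ℕ) (hn : 3 ≤ n)
    (xbar : ℕ → ℝ)
    (hxbar1 : xbar 1 = sSup {y : ℝ | (∫ s in Set.Iio y, rbar s) < L / n})
    (hxbar : ∀ i, 2 ≤ i → i ≤ n - 1 →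
        xbar i = sSup {y : ℝ | (∫ s in Set.Ioc (xbar (i-1)) y, rbar s) < L / n})
    -- the follow-the-leader system
    (x : ℕ → ℝ → ℝ)
    (hODE : ∀ i, 1 ≤ i → i ≤ n - 2 → ∀ t, 0 ≤ t →
        HasDerivWithinAt (x i) (v ((L / n) / (x (i+1) t - x i t))) (Set.Ici 0) t)
    (hlead : ∀ t, 0 ≤ t → HasDerivWithinAt (x (n-1)) vmax (Set.Ici 0) t)
    (hIC : ∀ i, 1 ≤ i → i ≤ n - 1 → x i 0 = xbar i) :
    (∀ t, 0 ≤ t → ∀ i, 1 ≤ i → i ≤ n - 2 → (L / n) / R ≤ x (i+1) t - x i t) ∧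
    (∀ t, 0 ≤ t → ∀ i, 1 ≤ i → i ≤ n - 2 → x i t < x (i+1) t) := by
  set ℓ : ℝ := L / n with hℓdef
  have hnpos : (0:ℝ) < n := by
    have : 0 < n := by omega
    exact_mod_cast this
  have hℓ : 0 < ℓ := div_pos hLpos hnpos
  have h0r : ∀ y, 0 ≤ rbar y := fun y => (hrbar_range y).1
  -- a.e. bound by R
  have hae : ∀ᵐ y : ℝ, rbar y ≤ R := by
    have h1 : ∀ᵐ y : ℝ, (‖rbar y‖₊ : ℝ≥0∞) ≤ eLpNormEssSup rbar volume :=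
      ae_le_eLpNormEssSup
    rw [← eLpNorm_exponent_top, hR] at h1
    filter_upwards [h1] with y hy
    have h2 : ((‖rbar y‖₊ : ℝ≥0∞)).toReal ≤ (ENNReal.ofReal R).toReal :=
      ENNReal.toReal_mono ENNReal.ofReal_ne_top hy
    rw [ENNReal.toReal_ofReal hRpos.le] at h2
    have h3 : ‖rbar y‖ ≤ R := by simpa using h2
    calc rbar y ≤ |rbar y| := le_abs_self _
      _ = ‖rbar y‖ := (Real.norm_eq_abs _).symm
      _ ≤ R := h3
  -- R ≤ ρmax
  have hRρ : R ≤ ρmax := by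
    have h1 : eLpNormEssSup rbar volume ≤ ENNReal.ofReal ρmax :=
      eLpNormEssSup_le_of_ae_bound (C := ρmax)
        (Eventually.of_forall fun y => by
          rw [Real.norm_eq_abs, abs_of_nonneg (h0r y)]
          exact (hrbar_range y).2)
    rw [← eLpNorm_exponent_top, hR] at h1
    exact (ENNReal.ofReal_le_ofReal_iff hρmax.le).mp h1
  have hLn : L = n * ℓ := by
    rw [hℓdef]
    field_simp
  have hinit := atomize rbar hrbar_int h0r R ℓ hRpos hℓ hae L hL n hn hLn xbar hxbar1 hxbar
  set c : ℝ := ℓ / R with hc_def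
  have hc : 0 < c := div_pos hℓ hRpos
  -- monotonicity of v
  have hvcont : ContinuousOn v (Icc 0 ρmax) := fun r hr =>
    ((hv_deriv r hr).continuousAt).continuousWithinAt
  have hSA : StrictAntiOn v (Icc 0 ρmax) :=
    strictAntiOn_of_deriv_neg (convex_Icc _ _) hvcont (fun r hr => by
      rw [(hv_deriv r (interior_subset hr)).deriv]
      exact hv'_neg r (interior_subset hr))
  have hAnti : ∀ r1 r2, r1 ∈ Icc (0:ℝ) ρmax → r2 ∈ Icc (0:ℝ) ρmax → r1 ≤ r2 →
      v r2 ≤ v r1 := by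
    intro r1 r2 h1 h2 h12
    rcases eq_or_lt_of_le h12 with h | h
    · rw [h]
    · exact (hSA h1 h2 h).le
  -- local linear upper bound at ρmax
  obtain ⟨ε, hεpos, hP⟩ : ∃ ε > 0, ∀ r : ℝ, |r - ρmax| < ε →
      |v r - v ρmax - (r - ρmax) * v' ρmax| ≤ |r - ρmax| := by
    have hdρ : HasDerivAt v (v' ρmax) ρmax := hv_deriv ρmax ⟨hρmax.le, le_rfl⟩
    have h1 := (hasDerivAt_iff_isLittleO.mp hdρ).def one_pos
    rw [Metric.eventually_nhds_iff] at h1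
    obtain ⟨ε, hε, h⟩ := h1
    refine ⟨ε, hε, fun r hr => ?_⟩
    have h2 := h (show dist r ρmax < ε by rwa [Real.dist_eq])
    simpa [Real.norm_eq_abs, smul_eq_mul, one_mul] using h2
  set ε0 : ℝ := ε / 2 with hε0def
  set ρε : ℝ := ρmax + ε0 with hρεdef
  have hρε : ρmax < ρε := by rw [hρεdef]; have : 0 < ε0 := by rw [hε0def]; linarith
                             linarith
  have hρεpos : 0 < ρε := by linarith
  set K0 : ℝ := |v' ρmax| + 1 with hK0def
  have hK0 : 0 < K0 := by rw [hK0def]; positivity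
  have claimB : ∀ r, R ≤ r → r ≤ ρε → v r ≤ v R + K0 * (r - R) := by
    intro r hRr hrρε
    have hRIcc : R ∈ Icc (0:ℝ) ρmax := ⟨hRpos.le, hRρ⟩
    rcases le_or_gt r ρmax with h | h
    · have h1 := hAnti R r hRIcc ⟨le_trans hRpos.le hRr, h⟩ hRr
      nlinarith [mul_nonneg hK0.le (sub_nonneg.mpr hRr)]
    · have habs : |r - ρmax| < ε := by
        rw [abs_of_pos (by linarith)]
        have : r ≤ ρmax + ε / 2 := by rw [hρεdef, hε0def] at hrρε; linarith
        linarith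
      have h2 := hP r habs
      have h3 : v r - v ρmax - (r - ρmax) * v' ρmax ≤ |r - ρmax| :=
        le_trans (le_abs_self _) h2
      rw [abs_of_pos (by linarith : (0:ℝ) < r - ρmax), hvρmax] at h3
      have h4 : v r ≤ (r - ρmax) * (v' ρmax + 1) := by nlinarith
      have e1 : v' ρmax + 1 ≤ K0 := by
        rw [hK0def]
        have := le_abs_self (v' ρmax)
        linarith
      have e2 : (0:ℝ) ≤ r - ρmax := by linarith
      have e3 : r - ρmax ≤ r - R := by linarith
      have h5 : (r - ρmax) * (v' ρmax + 1) ≤ K0 * (r - R) := by nlinarith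
      have h6 : 0 ≤ v R := (hv_range R hRIcc).1
      linarith
  set δ0 : ℝ := c - ℓ / ρε with hδ0def
  have h00 : c - δ0 = ℓ / ρε := by rw [hδ0def]; ring
  have hδ0 : 0 < δ0 := by
    rw [hδ0def, hc_def]
    have : ℓ / ρε < ℓ / R := div_lt_div_of_pos_left hℓ hRpos (lt_of_le_of_lt hRρ hρε)
    linarith
  set K : ℝ := K0 * ρε / c with hKdef
  have hK : 0 ≤ K := by rw [hKdef]; positivity
  have hℓc : ℓ / c = R := by rw [hc_def]; field_simp
  have hvlow : ∀ g : ℝ, c - δ0 ≤ g → g ≤ c → v (ℓ / g) ≤ v R + K * (c - g) := by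
    intro g hg1 hg2
    rw [h00] at hg1
    have hgpos : 0 < g := lt_of_lt_of_le (div_pos hℓ hρεpos) hg1
    set r : ℝ := ℓ / g with hr
    have hrg : r * g = ℓ := div_mul_cancel₀ _ (ne_of_gt hgpos)
    have hRc : R * c = ℓ := by rw [hc_def]; field_simp
    have hrρε : r ≤ ρε := by
      rw [hr, div_le_iff₀ hgpos]
      have h1 : ℓ ≤ g * ρε := (div_le_iff₀ hρεpos).mp hg1
      linarith
    have hRr : R ≤ r := by
      rw [hr, le_div_iff₀ hgpos]
      calc R * g ≤ R * c := mul_le_mul_of_nonneg_left hg2 hRpos.le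
        _ = ℓ := hRc
    have h1 := claimB r hRr hrρε
    have e1 : 0 ≤ (c - g) * (ρε - r) := mul_nonneg (by linarith) (by linarith)
    have e2 : r * c + g * ρε ≤ c * ρε + ℓ := by nlinarith
    have h2 : K0 * (r - R) ≤ K * (c - g) := by
      have hKc : K * (c - g) = K0 * ρε * (c - g) / c := by rw [hKdef]; ring
      rw [hKc, le_div_iff₀ hc]
      nlinarith
    linarith
  have hvRlow : v R ≤ vmax := by
    rw [← hv0]
    exact hAnti 0 R ⟨le_rfl, hρmax.le⟩ ⟨hRpos.le, hRρ⟩ hRpos.le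
  -- initial gaps
  have hgap0 : ∀ i, 1 ≤ i → i ≤ n - 2 → c ≤ x (i+1) 0 - x i 0 := by
    intro i h1 h2
    have h3 := hinit (i+1) (by omega) (by omega)
    have h4 : i + 1 - 1 = i := by omega
    rw [h4] at h3
    rw [hIC i h1 (by omega), hIC (i+1) (by omega) (by omega), hc_def]
    linarith
  -- single induction step
  have step : ∀ i, 1 ≤ i → i ≤ n - 2 → ∀ lead : ℝ → ℝ,
      (∀ t, 0 ≤ t → HasDerivWithinAt (x (i+1)) (lead t) (Set.Ici 0) t) →
      (∀ t, 0 ≤ t → v R ≤ lead t) →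
      ∀ t, 0 ≤ t → c ≤ x (i+1) t - x i t := by
    intro i h1 h2 lead hld hldR
    refine barrier_aux c δ0 K hc hδ0 hK (fun t => x (i+1) t - x i t)
      (fun t => lead t - v (ℓ / (x (i+1) t - x i t)))
      (fun t ht => (hld t ht).sub (hODE i h1 h2 t ht)) (hgap0 i h1 h2) ?_
    intro t ht hg1 hg2
    have h3 := hvlow _ hg1 hg2
    have h4 := hldR t ht
    linarith
  -- leader pair
  have hld_top : ∀ t, 0 ≤ t → c ≤ x (n-2+1) t - x (n-2) t := by
    refine step (n-2) (by omega) le_rfl (fun _ => vmax) ?_ (fun t ht => hvRlow)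
    intro t ht
    have e : n - 2 + 1 = n - 1 := by omega
    rw [e]
    exact hlead t ht
  -- downward induction
  have main : ∀ k : ℕ, ∀ i, 1 ≤ i → i ≤ n - 2 → n - 2 - i ≤ k →
      ∀ t, 0 ≤ t → c ≤ x (i+1) t - x i t := by
    intro k
    induction k with
    | zero =>
      intro i h1 h2 h3
      have hi : i = n - 2 := by omega
      subst hi
      exact hld_top
    | succ k ih =>
      intro i h1 h2 h3
      by_cases hi : i = n - 2
      · subst hi; exact hld_top
      · have h2' : i + 1 ≤ n - 2 := by omega
        have hnext : ∀ t, 0 ≤ t → c ≤ x (i+2) t - x (i+1) t :=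
          fun t ht => ih (i+1) (by omega) h2' (by omega) t ht
        refine step i h1 h2 (fun t => v (ℓ / (x (i+2) t - x (i+1) t))) ?_ ?_
        · intro t ht
          exact hODE (i+1) (by omega) h2' t ht
        · intro t ht
          have hg2 : c ≤ x (i+2) t - x (i+1) t := hnext t ht
          have hg2pos : 0 < x (i+2) t - x (i+1) t := lt_of_lt_of_le hc hg2
          have hd1 : ℓ / (x (i+2) t - x (i+1) t) ≤ R := by
            rw [← hℓc]
            exact div_le_div_of_nonneg_left hℓ.le hc hg2
          have hd0 : 0 ≤ ℓ / (x (i+2) t - x (i+1) t) := div_nonneg hℓ.le hg2pos.le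
          exact hAnti _ R ⟨hd0, le_trans hd1 hRρ⟩ ⟨hRpos.le, hRρ⟩ hd1
  constructor
  · intro t ht i h1 h2
    exact main (n-2) i h1 h2 (by omega) t ht
  · intro t ht i h1 h2
    have := main (n-2) i h1 h2 (by omega) t ht
    linarith
end

section
/- Discrete Oleinik-type inequality: assume additionally that ρ ↦ ρ v'(ρ) is nonincreasing on [0,ρ_max]. Then the solution of the Cauchy FTL scheme satisfies, for every t > 0 and every i ∈ {1,…,n−2}, ẋᵢ₊₁ⁿ(t) − ẋᵢⁿ(t) ≤ (xᵢ₊₁ⁿ(t) − xᵢⁿ(t))/t; equivalently, v(Rᵢ₊₁ⁿ(t)) − v(Rᵢⁿ(t)) ≤ (xᵢ₊₁ⁿ(t) − xᵢⁿ(t))/t for i = 1,…,n−3 and v_max − v(Rⁿ_{n−2}(t)) ≤ (xⁿ_{n−1}(t) − xⁿ_{n−2}(t))/t. -/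
open MeasureTheory Set Filter Topology
open scoped ENNReal

section OleinikAux

open MeasureTheory Set Filter Topology

lemma slope_key (f : ℝ → ℝ) (d t0 : ℝ) (S : Set ℝ)
    (hf : HasDerivWithinAt f d S t0)
    (hcl : (𝓝[S \ {t0}] t0).NeBot)
    (h : ∀ s ∈ S, s ≠ t0 → 0 ≤ (f s - f t0) / (s - t0)) : 0 ≤ d := by
  have ht := hasDerivWithinAt_iff_tendsto_slope.1 hf
  refine ge_of_tendsto ht ?_
  filter_upwards [self_mem_nhdsWithin] with s hs
  rw [slope_def_field]
  exact h s hs.1 hs.2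

lemma left_touch (f : ℝ → ℝ) (d t0 : ℝ) (ht0 : 0 < t0)
    (hf : HasDerivWithinAt f d (Set.Ici 0) t0)
    (h : ∀ s, 0 ≤ s → s < t0 → f s ≤ f t0) : 0 ≤ d := by
  refine slope_key f d t0 (Set.Ico 0 t0) (hf.mono Set.Ico_subset_Ici_self) ?_ ?_
  · rw [mem_closure_iff_nhdsWithin_neBot.symm]
    have : Set.Ico (0:ℝ) t0 \ {t0} = Set.Ico 0 t0 := by
      apply Set.diff_singleton_eq_self; simp
    rw [this]
    exact closure_Ico (by positivity : (0:ℝ) ≠ t0) ▸ (by simp [ht0.le] : t0 ∈ Set.Icc 0 t0)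
  · intro s hs _
    have h1 : f s - f t0 ≤ 0 := sub_nonpos.2 (h s hs.1 hs.2)
    have h2 : s - t0 < 0 := sub_neg.2 hs.2
    exact div_nonneg_of_nonpos h1 h2.le

lemma left_min (f : ℝ → ℝ) (d t0 : ℝ) (ht0 : 0 < t0)
    (hf : HasDerivWithinAt f d (Set.Ici 0) t0)
    (h : ∀ s, 0 ≤ s → s < t0 → f t0 ≤ f s) : d ≤ 0 := by
  have := left_touch (fun s => -f s) (-d) t0 ht0 hf.neg
    (fun s h0 h1 => neg_le_neg (h s h0 h1))
  linarith

lemma right_viol (f : ℝ → ℝ) (d t0 : ℝ) (ht0 : 0 ≤ t0) (V : Set ℝ)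
    (hV : V ⊆ Set.Ioi t0) (hcl : t0 ∈ closure V)
    (hf : HasDerivWithinAt f d (Set.Ici 0) t0)
    (h : ∀ s ∈ V, f s < f t0) : d ≤ 0 := by
  have key : 0 ≤ -d := by
    refine slope_key (fun s => -f s) (-d) t0 V (hf.neg.mono ?_) ?_ ?_
    · exact fun s hs => le_trans ht0 (le_of_lt (hV hs))
    · rw [mem_closure_iff_nhdsWithin_neBot.symm]
      have : V \ {t0} = V := Set.diff_singleton_eq_self (fun h0 => absurd (hV h0) (by simp))
      rwa [this]
    · intro s hs _
      have h1 : 0 < -f s - -f t0 := by have := h s hs; linarith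
      have h2 : 0 < s - t0 := sub_pos.2 (hV hs)
      positivity
  linarith

lemma csSup_val_le (Φ : ℝ → ℝ) (K l : ℝ) (hK : 0 ≤ K)
    (hne : {y | Φ y < l}.Nonempty) (hbdd : BddAbove {y | Φ y < l})
    (hLip : ∀ y y', y ≤ y' → Φ y' ≤ Φ y + K * (y' - y)) :
    Φ (sSup {y | Φ y < l}) ≤ l := by
  set S := {y | Φ y < l}
  have key : ∀ ε : ℝ, 0 < ε → Φ (sSup S) ≤ l + ε := by
    intro ε hε
    set δ := ε / (K + 1) with hδ
    have hδpos : 0 < δ := by positivity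
    obtain ⟨y, hyS, hy⟩ := exists_lt_of_lt_csSup hne (by linarith : sSup S - δ < sSup S)
    have hyle : y ≤ sSup S := le_csSup hbdd hyS
    have h1 := hLip y (sSup S) hyle
    have h2 : K * (sSup S - y) ≤ K * δ := by
      apply mul_le_mul_of_nonneg_left _ hK; linarith
    have h3 : K * δ ≤ ε := by
      rw [hδ]
      calc K * (ε / (K+1)) = ε * (K/(K+1)) := by ring
      _ ≤ ε * 1 := by
          apply mul_le_mul_of_nonneg_left _ hε.le
          rw [div_le_one (by linarith)]; linarith
      _ = ε := by ring
    have h4 : Φ y < l := hyS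
    linarith
  by_contra hcon
  push_neg at hcon
  have := key ((Φ (sSup S) - l)/2) (by linarith)
  linarith

lemma clos_le (f : ℝ → ℝ) (S : Set ℝ) (t0 c : ℝ)
    (hS : S ⊆ Set.Ici 0) (hf : ContinuousWithinAt f (Set.Ici 0) t0)
    (hcl : t0 ∈ closure S) (h : ∀ s ∈ S, f s ≤ c) : f t0 ≤ c := by
  have hne : (𝓝[S] t0).NeBot := mem_closure_iff_nhdsWithin_neBot.1 hcl
  refine le_of_tendsto (hf.mono hS) ?_
  filter_upwards [self_mem_nhdsWithin] with s hs
  exact h s hs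

lemma clos_ge (f : ℝ → ℝ) (S : Set ℝ) (t0 c : ℝ)
    (hS : S ⊆ Set.Ici 0) (hf : ContinuousWithinAt f (Set.Ici 0) t0)
    (hcl : t0 ∈ closure S) (h : ∀ s ∈ S, c ≤ f s) : c ≤ f t0 := by
  have hne : (𝓝[S] t0).NeBot := mem_closure_iff_nhdsWithin_neBot.1 hcl
  refine ge_of_tendsto (hf.mono hS) ?_
  filter_upwards [self_mem_nhdsWithin] with s hs
  exact h s hs


lemma initial_gaps (ρmax L : ℝ) (hρmax : 0 < ρmax)
    (rbar : ℝ → ℝ) (hrbar_int : Integrable rbar)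
    (hrbar_range : ∀ y, rbar y ∈ Set.Icc (0:ℝ) ρmax)
    (hL : L = ∫ y, rbar y) (hLpos : 0 < L)
    (n : ℕ) (hn : 3 ≤ n) (xbar : ℕ → ℝ)
    (hxbar1 : xbar 1 = sSup {y : ℝ | (∫ s in Set.Iio y, rbar s) < L / n})
    (hxbar : ∀ i, 2 ≤ i → i ≤ n - 1 →
        xbar i = sSup {y : ℝ | (∫ s in Set.Ioc (xbar (i-1)) y, rbar s) < L / n}) :
    ∀ i, 1 ≤ i → i ≤ n - 2 → (L / n) / ρmax ≤ xbar (i+1) - xbar i := by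
  have hnn : ∀ y, (0:ℝ) ≤ rbar y := fun y => (hrbar_range y).1
  have hub : ∀ y, rbar y ≤ ρmax := fun y => (hrbar_range y).2
  have hInt : ∀ s : Set ℝ, IntegrableOn rbar s := fun s => hrbar_int.integrableOn
  have hn0 : (0:ℝ) < n := by positivity
  set l := L / n with hl
  have hlpos : 0 < l := by positivity
  have hlL : l < L := by
    rw [hl, div_lt_iff₀ hn0]
    have h3 : (3:ℝ) ≤ n := by exact_mod_cast hn
    nlinarith
  -- basic facts about set integrals of rbar
  have hmono : ∀ (A B : Set ℝ), A ⊆ B → (∫ s in A, rbar s) ≤ ∫ s in B, rbar s := by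
    intro A B hAB
    exact setIntegral_mono_set (hInt B) (ae_of_all _ hnn) (HasSubset.Subset.eventuallyLE hAB)
  have hnonneg : ∀ A : Set ℝ, 0 ≤ ∫ s in A, rbar s := fun A =>
    integral_nonneg hnn
  have hIocBound : ∀ a b : ℝ, a ≤ b → (∫ s in Set.Ioc a b, rbar s) ≤ ρmax * (b - a) := by
    intro a b hab
    calc (∫ s in Set.Ioc a b, rbar s) ≤ ∫ s in Set.Ioc a b, ρmax :=
          setIntegral_mono_on (hInt _) (integrableOn_const (by simp))
            measurableSet_Ioc (fun x _ => hub x)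
      _ = ρmax * (b - a) := by
          rw [setIntegral_const, Real.volume_real_Ioc_of_le hab, smul_eq_mul]
          ring
  have hIcoBound : ∀ a b : ℝ, a ≤ b → (∫ s in Set.Ico a b, rbar s) ≤ ρmax * (b - a) := by
    intro a b hab
    calc (∫ s in Set.Ico a b, rbar s) ≤ ∫ s in Set.Ico a b, ρmax :=
          setIntegral_mono_on (hInt _) (integrableOn_const (by simp))
            measurableSet_Ico (fun x _ => hub x)
      _ = ρmax * (b - a) := by
          rw [setIntegral_const, Real.volume_real_Ico_of_le hab, smul_eq_mul]
          ring
  -- F a b = mass on (a, b]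
  set F : ℝ → ℝ → ℝ := fun a b => ∫ s in Set.Ioc a b, rbar s with hF
  have hFLip : ∀ a y y', y ≤ y' → F a y' ≤ F a y + ρmax * (y' - y) := by
    intro a y y' hyy
    have hsub : Set.Ioc a y' ⊆ Set.Ioc a y ∪ Set.Ioc y y' := by
      intro s hs
      rcases le_or_gt s y with h | h
      · exact Or.inl ⟨hs.1, h⟩
      · exact Or.inr ⟨h, hs.2⟩
    have hdisj : Disjoint (Set.Ioc a y) (Set.Ioc y y') :=
      Set.disjoint_left.2 (fun s hs hs' => absurd hs.2 (not_le.2 hs'.1))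
    calc F a y' ≤ ∫ s in (Set.Ioc a y ∪ Set.Ioc y y'), rbar s := hmono _ _ hsub
    _ = F a y + ∫ s in Set.Ioc y y', rbar s :=
        setIntegral_union hdisj measurableSet_Ioc (hInt _) (hInt _)
    _ ≤ F a y + ρmax * (y' - y) := by linarith [hIocBound y y' hyy]
  -- G y = mass on (-∞, y)
  set G : ℝ → ℝ := fun y => ∫ s in Set.Iio y, rbar s with hG
  have hGLip : ∀ y y', y ≤ y' → G y' ≤ G y + ρmax * (y' - y) := by
    intro y y' hyy
    have hsub : Set.Iio y' ⊆ Set.Iio y ∪ Set.Ico y y' := by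
      intro s hs
      rcases lt_or_ge s y with h | h
      · exact Or.inl h
      · exact Or.inr ⟨h, hs⟩
    have hdisj : Disjoint (Set.Iio y) (Set.Ico y y') :=
      Set.disjoint_left.2 (fun s hs hs' => absurd hs'.1 (not_le.2 hs))
    calc G y' ≤ ∫ s in (Set.Iio y ∪ Set.Ico y y'), rbar s := hmono _ _ hsub
    _ = G y + ∫ s in Set.Ico y y', rbar s :=
        setIntegral_union hdisj measurableSet_Ico (hInt _) (hInt _)
    _ ≤ G y + ρmax * (y' - y) := by linarith [hIcoBound y y' hyy]
  -- splitting of Iic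
  have hIicSplit : ∀ a b : ℝ, a ≤ b →
      (∫ s in Set.Iic b, rbar s) = (∫ s in Set.Iic a, rbar s) + F a b := by
    intro a b hab
    rw [← Set.Iic_union_Ioc_eq_Iic hab]
    exact setIntegral_union
      (Set.disjoint_left.2 (fun s hs hs' => absurd hs'.1 (not_lt.2 hs)))
      measurableSet_Ioc (hInt _) (hInt _)
  have htot : ∀ a : ℝ, (∫ s in Set.Iic a, rbar s) + (∫ s in Set.Ioi a, rbar s) = L := by
    intro a
    rw [hL]
    have h := integral_add_compl (measurableSet_Iic (a := a)) hrbar_int (f := rbar) (μ := volume)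
    rwa [Set.compl_Iic] at h
  -- key facts about the sSup construction at level a with heavy tail
  have key : ∀ a : ℝ, l < (∫ s in Set.Ioi a, rbar s) →
      l / ρmax ≤ sSup {y | F a y < l} - a ∧ F a (sSup {y | F a y < l}) ≤ l := by
    intro a htail
    set S := {y | F a y < l} with hS
    have hFaa : F a a = 0 := by
      simp only [hF]
      rw [Set.Ioc_self]
      simp
    have hne : S.Nonempty := ⟨a, by simp only [hS, Set.mem_setOf_eq, hFaa]; linarith⟩
    have hbdd : BddAbove S := by
      have ht := MeasureTheory.intervalIntegral_tendsto_integral_Ioi a (hInt (Set.Ioi a))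
        (tendsto_id (x := atTop))
      have hev : ∀ᶠ b in atTop, l < (∫ x in a..b, rbar x) :=
        ht.eventually (eventually_gt_nhds htail)
      obtain ⟨y₀, hy₀⟩ := (hev.and (eventually_ge_atTop a)).exists
      refine ⟨y₀, fun y hy => ?_⟩
      by_contra hcon
      push_neg at hcon
      have h1 : F a y₀ ≤ F a y := hmono _ _ (Set.Ioc_subset_Ioc_right hcon.le)
      rw [intervalIntegral.integral_of_le hy₀.2] at hy₀
      have : F a y₀ = ∫ x in Set.Ioc a y₀, rbar x := rfl
      have h2 : y ∈ S := hy
      simp only [hS, Set.mem_setOf_eq] at h2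
      have := hy₀.1
      linarith
    have hsup_le : F a (sSup S) ≤ l := csSup_val_le (F a) ρmax l hρmax.le hne hbdd (hFLip a)
    refine ⟨?_, hsup_le⟩
    have hc : ∀ c, 0 ≤ c → c < l / ρmax → c ≤ sSup S - a := by
      intro c hc0 hcl
      have hmem : a + c ∈ S := by
        have h1 := hFLip a a (a + c) (by linarith)
        have h2 : ρmax * c < l := by
          rw [lt_div_iff₀ hρmax] at hcl
          linarith [hcl]
        simp only [hS, Set.mem_setOf_eq]
        rw [hFaa] at h1
        simp only [add_sub_cancel_left] at h1
        linarith
      have := le_csSup hbdd hmem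
      linarith
    by_contra hcon
    push_neg at hcon
    rcases le_or_gt 0 (sSup S - a) with hg | hg
    · have := hc ((sSup S - a + l / ρmax) / 2) (by linarith) (by linarith)
      linarith
    · have h0 := hc 0 le_rfl (by positivity)
      linarith
  -- total masses below the atom points
  have masses : ∀ i, 1 ≤ i → i ≤ n - 1 → (∫ s in Set.Iic (xbar i), rbar s) ≤ i * l := by
    intro i
    induction i with
    | zero => intro h; omega
    | succ j ih =>
      intro _ hj1
      rcases Nat.eq_zero_or_pos j with hj0 | hjpos
      · -- i = 1 : base case using G
        subst hj0
        have hbdd : BddAbove {y | G y < l} := by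
          have ht := MeasureTheory.intervalIntegral_tendsto_integral hrbar_int
            (tendsto_neg_atTop_atBot) (tendsto_id (x := atTop))
          rw [← hL] at ht
          have hev : ∀ᶠ b in atTop, l < (∫ x in (-b)..b, rbar x) :=
            ht.eventually (eventually_gt_nhds hlL)
          obtain ⟨y₀, hy₀⟩ := (hev.and (eventually_ge_atTop 0)).exists
          refine ⟨y₀, fun y hy => ?_⟩
          by_contra hcon
          push_neg at hcon
          have hle : -y₀ ≤ y₀ := by linarith [hy₀.2]
          rw [intervalIntegral.integral_of_le hle] at hy₀
          have h1 : (∫ x in Set.Ioc (-y₀) y₀, rbar x) ≤ G y := by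
            apply hmono
            intro s hs
            exact lt_of_le_of_lt hs.2 hcon
          have h2 : G y < l := hy
          linarith [hy₀.1]
        have hne : {y | G y < l}.Nonempty := by
          have ht := MeasureTheory.intervalIntegral_tendsto_integral_Iic 0 (hInt (Set.Iic 0))
            (tendsto_id (x := atBot))
          have hev : ∀ᶠ a in atBot, (∫ s in Set.Iic (0:ℝ), rbar s) - l < (∫ x in a..0, rbar x) :=
            ht.eventually (eventually_gt_nhds (by linarith : (∫ s in Set.Iic (0:ℝ), rbar s) - l < (∫ s in Set.Iic (0:ℝ), rbar s)))
          obtain ⟨a, ha⟩ := (hev.and (eventually_le_atBot 0)).exists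
          refine ⟨a, ?_⟩
          have hsplit := hIicSplit a 0 ha.2
          rw [intervalIntegral.integral_of_le ha.2] at ha
          have h1 : G a ≤ ∫ s in Set.Iic a, rbar s := hmono _ _ Set.Iio_subset_Iic_self
          have h2 : F a 0 = ∫ x in Set.Ioc a 0, rbar x := rfl
          simp only [Set.mem_setOf_eq]
          have := ha.1
          linarith
        have hmass : G (sSup {y | G y < l}) ≤ l := csSup_val_le G ρmax l hρmax.le hne hbdd hGLip
        rw [← hxbar1] at hmass
        rw [MeasureTheory.integral_Iic_eq_integral_Iio]
        simpa using hmass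
      · -- step case
        have hj1' : 1 ≤ j := hjpos
        have hjn2 : j ≤ n - 2 := by omega
        have ihm := ih hj1' (by omega)
        have hcast : (j:ℝ) ≤ (n:ℝ) - 2 := by
          have : j + 2 ≤ n := by omega
          have := (Nat.cast_le (α := ℝ)).2 this
          push_cast at this
          linarith
        have hLnl : L = n * l := by
          rw [hl]
          field_simp
        have htail : l < ∫ s in Set.Ioi (xbar j), rbar s := by
          have := htot (xbar j)
          nlinarith [hlpos]
        have hx := hxbar (j+1) (by omega) (by omega)
        simp only [Nat.add_sub_cancel] at hx
        have hk := key (xbar j) htail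
        rw [← hx] at hk
        have hxle : xbar j ≤ xbar (j+1) := by
          have h1 : 0 < l / ρmax := by positivity
          linarith [hk.1]
        rw [hIicSplit (xbar j) (xbar (j+1)) hxle]
        push_cast
        linarith [hk.2, ihm]
  -- the gaps
  intro i hi1 hi2
  have hcast : (i:ℝ) ≤ (n:ℝ) - 2 := by
    have : i + 2 ≤ n := by omega
    have := (Nat.cast_le (α := ℝ)).2 this
    push_cast at this
    linarith
  have hLnl : L = n * l := by
    rw [hl]
    field_simp
  have hmi := masses i hi1 (by omega)
  have htail : l < ∫ s in Set.Ioi (xbar i), rbar s := by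
    have := htot (xbar i)
    nlinarith [hlpos]
  have hx := hxbar (i+1) (by omega) (by omega)
  simp only [Nat.add_sub_cancel] at hx
  have hk := key (xbar i) htail
  rw [← hx] at hk
  linarith [hk.1]

end OleinikAux

set_option maxHeartbeats 2000000

/-- **Discrete Oleinik-type inequality.**  If moreover `ρ ↦ ρ·v'(ρ)` is nonincreasing on
`[0,ρmax]`, then for all `t > 0` the follow-the-leader particles satisfy
`ẋᵢ₊₁(t) − ẋᵢ(t) ≤ (xᵢ₊₁(t) − xᵢ(t))/t`, i.e.
`v(Rᵢ₊₁(t)) − v(Rᵢ(t)) ≤ (xᵢ₊₁(t) − xᵢ(t))/t` for `i = 1,…,n−3` and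
`vmax − v(Rⁿ_{n−2}(t)) ≤ (x_{n−1}(t) − x_{n−2}(t))/t`. -/
theorem stmt3
    -- velocity hypothesis (V1)
    (ρmax vmax : ℝ) (hρmax : 0 < ρmax) (hvmaxpos : 0 < vmax)
    (v v' : ℝ → ℝ)
    (hv_deriv : ∀ r ∈ Set.Icc (0:ℝ) ρmax, HasDerivAt v (v' r) r)
    (hv'_cont : ContinuousOn v' (Set.Icc (0:ℝ) ρmax))
    (hv'_neg : ∀ r ∈ Set.Icc (0:ℝ) ρmax, v' r < 0)
    (hv_range : ∀ r ∈ Set.Icc (0:ℝ) ρmax, v r ∈ Set.Icc (0:ℝ) vmax)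
    (hv0 : v 0 = vmax) (hvρmax : v ρmax = 0)
    -- hypothesis (V2)
    (hV2 : AntitoneOn (fun r => r * v' r) (Set.Icc (0:ℝ) ρmax))
    -- initial datum (I1)
    (rbar : ℝ → ℝ) (hrbar_int : Integrable rbar)
    (hrbar_range : ∀ y, rbar y ∈ Set.Icc (0:ℝ) ρmax)
    (L R : ℝ) (hL : L = ∫ y, rbar y) (hLpos : 0 < L)
    (hR : eLpNorm rbar ⊤ volume = ENNReal.ofReal R) (hRpos : 0 < R)
    -- atomization of the initial datum
    (n : ℕ) (hn : 3 ≤ n)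
    (xbar : ℕ → ℝ)
    (hxbar1 : xbar 1 = sSup {y : ℝ | (∫ s in Set.Iio y, rbar s) < L / n})
    (hxbar : ∀ i, 2 ≤ i → i ≤ n - 1 →
        xbar i = sSup {y : ℝ | (∫ s in Set.Ioc (xbar (i-1)) y, rbar s) < L / n})
    -- the follow-the-leader system
    (x : ℕ → ℝ → ℝ)
    (hODE : ∀ i, 1 ≤ i → i ≤ n - 2 → ∀ t, 0 ≤ t →
        HasDerivWithinAt (x i) (v ((L / n) / (x (i+1) t - x i t))) (Set.Ici 0) t)
    (hlead : ∀ t, 0 ≤ t → HasDerivWithinAt (x (n-1)) vmax (Set.Ici 0) t)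
    (hIC : ∀ i, 1 ≤ i → i ≤ n - 1 → x i 0 = xbar i) :
    ∀ t, 0 < t →
      (∀ i, 1 ≤ i → i ≤ n - 3 →
        v ((L / n) / (x (i+2) t - x (i+1) t)) - v ((L / n) / (x (i+1) t - x i t))
          ≤ (x (i+1) t - x i t) / t) ∧
      (vmax - v ((L / n) / (x (n-1) t - x (n-2) t))
          ≤ (x (n-1) t - x (n-2) t) / t) := by
  classical
  set l := L / (n:ℝ) with hl
  have hn0 : (0:ℝ) < n := by positivity
  have hlpos : 0 < l := by rw [hl]; positivity
  have hgaps := initial_gaps ρmax L hρmax rbar hrbar_int hrbar_range hL hLpos n hn xbar hxbar1 hxbar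
  have hz0 : ∀ i, 1 ≤ i → i ≤ n - 2 → l / ρmax ≤ x (i+1) 0 - x i 0 := by
    intro i h1 h2
    rw [hIC i h1 (by omega), hIC (i+1) (by omega) (by omega)]
    exact hgaps i h1 h2
  set bdry := l / ρmax with hbdry
  have hbdrypos : 0 < bdry := by positivity
  -- velocity facts
  have hvcont : ContinuousOn v (Set.Icc 0 ρmax) :=
    fun r hr => (hv_deriv r hr).continuousAt.continuousWithinAt
  have hvanti : StrictAntiOn v (Set.Icc 0 ρmax) := by
    apply strictAntiOn_of_deriv_neg (convex_Icc _ _) hvcont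
    intro r hr
    rw [interior_Icc] at hr
    rw [(hv_deriv r ⟨hr.1.le, hr.2.le⟩).deriv]
    exact hv'_neg r ⟨hr.1.le, hr.2.le⟩
  have hvpos : ∀ r, 0 ≤ r → r < ρmax → 0 < v r := by
    intro r h0 h1
    have := hvanti ⟨h0, h1.le⟩ ⟨hρmax.le, le_rfl⟩ h1
    rwa [hvρmax] at this
  have hvnonneg : ∀ r, 0 ≤ r → r ≤ ρmax → 0 ≤ v r := fun r h0 h1 => (hv_range r ⟨h0, h1⟩).1
  -- just above ρmax the velocity is negative
  obtain ⟨δ, hδpos, hδ⟩ : ∃ δ > 0, ∀ r, ρmax < r → r < ρmax + δ → v r < 0 := by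
    have hd := hv_deriv ρmax ⟨hρmax.le, le_rfl⟩
    have hslope := hasDerivAt_iff_tendsto_slope.1 hd
    have hev : ∀ᶠ r in 𝓝[≠] ρmax, slope v ρmax r < 0 :=
      hslope.eventually (eventually_lt_nhds (hv'_neg ρmax ⟨hρmax.le, le_rfl⟩))
    rw [eventually_nhdsWithin_iff] at hev
    obtain ⟨δ, hδpos, hδ⟩ := Metric.eventually_nhds_iff.1 hev
    refine ⟨δ, hδpos, fun r h1 h2 => ?_⟩
    have hr : dist r ρmax < δ := by
      rw [Real.dist_eq, abs_of_pos (by linarith)]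
      linarith
    have := hδ hr (by intro h; simp at h; linarith)
    rw [slope_def_field, hvρmax, sub_zero] at this
    have hpos : 0 < r - ρmax := by linarith
    by_contra hcon
    push_neg at hcon
    have : 0 ≤ v r / (r - ρmax) := div_nonneg hcon hpos.le
    linarith
  -- gaps and velocities
  set z : ℕ → ℝ → ℝ := fun i t => x (i+1) t - x i t with hzdef
  set VV : ℕ → ℝ → ℝ := fun i t => if i = n-1 then vmax else v (l / z i t) with hVVdef
  have hVVe : ∀ i, i ≤ n - 2 → ∀ t, VV i t = v (l / z i t) := by
    intro i hi t
    simp only [hVVdef, if_neg (by omega : ¬ i = n-1)]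
  have hVVlead : ∀ t, VV (n-1) t = vmax := by intro t; simp [hVVdef]
  -- derivative of z
  have hzD : ∀ i, 1 ≤ i → i ≤ n - 2 → ∀ t, 0 ≤ t →
      HasDerivWithinAt (z i) (VV (i+1) t - VV i t) (Set.Ici 0) t := by
    intro i hi1 hi2 t ht
    have hxd : HasDerivWithinAt (x (i+1)) (VV (i+1) t) (Set.Ici 0) t := by
      rcases eq_or_ne (i+1) (n-1) with h | h
      · rw [h, hVVlead]
        exact hlead t ht
      · have hle : i + 1 ≤ n - 2 := by omega
        rw [hVVe (i+1) hle t]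
        exact hODE (i+1) (by omega) hle t ht
    have hxd2 : HasDerivWithinAt (x i) (VV i t) (Set.Ici 0) t := by
      rw [hVVe i hi2 t]
      exact hODE i hi1 hi2 t ht
    exact hxd.sub hxd2
  have hzc : ∀ i, 1 ≤ i → i ≤ n - 2 → ContinuousOn (z i) (Set.Ici 0) :=
    fun i h1 h2 t ht => (hzD i h1 h2 t ht).continuousWithinAt
  -- initial gaps
  have hz0' : ∀ i, 1 ≤ i → i ≤ n - 2 → bdry ≤ z i 0 := hz0
  -- the main invariant, by downward induction
  have hlb : l / bdry = ρmax := by rw [hbdry]; field_simp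
  have hQstep : ∀ i, 1 ≤ i → i ≤ n - 2 →
      (i = n - 2 ∨ (i + 1 ≤ n - 2 ∧ (∀ t, 0 ≤ t → bdry ≤ z (i+1) t) ∧ (∀ t, 0 < t → bdry < z (i+1) t))) →
      ((∀ t, 0 ≤ t → bdry ≤ z i t) ∧ (∀ t, 0 < t → bdry < z i t)) := by
    intro i hi1 hi2 hup
    have hVVi : ∀ t : ℝ, VV i t = v (l / z i t) := hVVe i hi2
    have hrmem : ∀ j t, bdry ≤ z j t → 0 < l / z j t ∧ l / z j t ≤ ρmax := by
      intro j t hzj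
      have hzpos : 0 < z j t := lt_of_lt_of_le hbdrypos hzj
      constructor
      · positivity
      · rw [← hlb]
        exact div_le_div_of_nonneg_left hlpos.le hbdrypos hzj
    have hrlt : ∀ j t, bdry < z j t → l / z j t < ρmax := by
      intro j t hzj
      have hzpos : 0 < z j t := lt_trans hbdrypos hzj
      rw [← hlb]
      exact div_lt_div_of_pos_left hlpos hbdrypos hzj
    have hupz : ∀ t, 0 ≤ t → 0 ≤ VV (i+1) t := by
      intro t ht
      rcases hup with h | h
      · rw [show i + 1 = n - 1 by omega, hVVlead]
        exact hvmaxpos.le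
      · rw [hVVe (i+1) h.1]
        obtain ⟨h1, h2⟩ := hrmem (i+1) t (h.2.1 t ht)
        exact hvnonneg _ h1.le h2
    have hupzpos : ∀ t, 0 < t → 0 < VV (i+1) t := by
      intro t ht
      rcases hup with h | h
      · rw [show i + 1 = n - 1 by omega, hVVlead]
        exact hvmaxpos
      · rw [hVVe (i+1) h.1]
        have hzj := h.2.2 t ht
        obtain ⟨h1, h2⟩ := hrmem (i+1) t hzj.le
        exact hvpos _ h1.le (hrlt (i+1) t hzj)
    have hVV0 : ∀ t : ℝ, z i t = bdry → VV i t = 0 := by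
      intro t hzt
      rw [hVVi, hzt, hlb, hvρmax]
    have part1 : ∀ t, 0 ≤ t → bdry ≤ z i t := by
      by_contra hcon
      push_neg at hcon
      obtain ⟨t₀, ht₀, hviol⟩ := hcon
      set A := {s : ℝ | 0 ≤ s ∧ s ≤ t₀ ∧ z i s < bdry} with hA
      have hAne : A.Nonempty := ⟨t₀, ht₀, le_rfl, hviol⟩
      have hAbdd : BddBelow A := ⟨0, fun s hs => hs.1⟩
      set τ := sInf A with hτ
      have hτ0 : 0 ≤ τ := le_csInf hAne (fun s hs => hs.1)
      have hτt₀ : τ ≤ t₀ := csInf_le hAbdd ⟨ht₀, le_rfl, hviol⟩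
      have hτcl : τ ∈ closure A := csInf_mem_closure hAne hAbdd
      have hAsub : A ⊆ Set.Ici 0 := fun s hs => hs.1
      have hzcτ : ContinuousWithinAt (z i) (Set.Ici 0) τ := (hzc i hi1 hi2) τ hτ0
      have hle : z i τ ≤ bdry := clos_le _ A τ bdry hAsub hzcτ hτcl (fun s hs => hs.2.2.le)
      have hge : bdry ≤ z i τ := by
        rcases eq_or_lt_of_le hτ0 with h0 | h0
        · rw [← h0]; exact hz0' i hi1 hi2
        · refine clos_ge _ (Set.Ico 0 τ) τ bdry (fun s hs => hs.1) hzcτ ?_ ?_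
          · rw [closure_Ico (ne_of_lt h0)]
            exact ⟨hτ0, le_rfl⟩
          · intro s hs
            by_contra hc
            push_neg at hc
            have : s ∈ A := ⟨hs.1, le_trans hs.2.le hτt₀, hc⟩
            exact absurd (csInf_le hAbdd this) (not_le.2 hs.2)
      have heq : z i τ = bdry := le_antisymm hle hge
      have hτA : τ ∉ A := fun h => absurd h.2.2 (by rw [heq]; exact lt_irrefl _)
      have hAIoi : A ⊆ Set.Ioi τ := fun s hs =>
        lt_of_le_of_ne (csInf_le hAbdd hs) (fun he => hτA (by rw [hτ, he]; exact hs))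
      have hder := hzD i hi1 hi2 τ hτ0
      have hdle : VV (i+1) τ - VV i τ ≤ 0 :=
        right_viol (z i) _ τ hτ0 A hAIoi hτcl hder (fun s hs => by rw [heq]; exact hs.2.2)
      have hVViτ : VV i τ = 0 := hVV0 τ heq
      have hup0 : VV (i+1) τ = 0 := le_antisymm (by linarith) (hupz τ hτ0)
      rcases eq_or_lt_of_le hτ0 with h0 | h0
      swap
      · exact absurd hup0 (ne_of_gt (hupzpos τ h0))
      rcases hup with hcase | hcase
      · rw [show i + 1 = n - 1 by omega, hVVlead] at hup0
        linarith
      obtain ⟨hin, hz1, hz1s⟩ := hcase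
      have hz00 : z i 0 = bdry := by rw [h0]; exact heq
      have hcont0 : ContinuousWithinAt (z i) (Set.Ici 0) 0 := (hzc i hi1 hi2) 0 (Set.mem_Ici.2 le_rfl)
      have hsmall : 0 < bdry - l / (ρmax + δ) := by
        have h1 : l / (ρmax + δ) < l / ρmax := div_lt_div_of_pos_left hlpos hρmax (by linarith)
        rw [hbdry]
        linarith
      obtain ⟨ε, hεpos, hε⟩ := Metric.continuousWithinAt_iff.1 hcont0 _ hsmall
      obtain ⟨a, haA, hda⟩ := Metric.mem_closure_iff.1 (h0 ▸ hτcl) ε hεpos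
      have ha0 : 0 < a := by
        have := hAIoi haA
        rwa [← h0] at this
      have haε : a < ε := by
        rw [Real.dist_eq, zero_sub, abs_neg, abs_of_pos ha0] at hda
        exact hda
      set B := {u : ℝ | 0 ≤ u ∧ u ≤ a ∧ bdry ≤ z i u} with hB
      have h0B : (0:ℝ) ∈ B := ⟨le_rfl, ha0.le, hz00.symm.le⟩
      have hBne : B.Nonempty := ⟨0, h0B⟩
      have hBbdd : BddAbove B := ⟨a, fun u hu => hu.2.1⟩
      set σ := sSup B with hσ
      have hσ0 : 0 ≤ σ := le_csSup hBbdd h0B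
      have hσa : σ ≤ a := csSup_le hBne (fun u hu => hu.2.1)
      have hσcl : σ ∈ closure B := csSup_mem_closure hBne hBbdd
      have hσc : ContinuousWithinAt (z i) (Set.Ici 0) σ := (hzc i hi1 hi2) σ hσ0
      have hσge : bdry ≤ z i σ := clos_ge _ B σ bdry (fun u hu => hu.1) hσc hσcl (fun u hu => hu.2.2)
      have hσa' : σ < a := by
        rcases lt_or_eq_of_le hσa with h | h
        · exact h
        · exfalso
          have := haA.2.2
          rw [← h] at this
          linarith
      have hnotB : ∀ u, σ < u → u ≤ a → z i u < bdry := by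
        intro u h1 h2
        by_contra hc
        push_neg at hc
        have : u ∈ B := ⟨le_trans hσ0 h1.le, h2, hc⟩
        exact absurd (le_csSup hBbdd this) (not_le.2 h1)
      rcases eq_or_lt_of_le hσ0 with hσ00 | hσpos
      swap
      · -- σ > 0 : the gap touches the boundary at σ and dips just after, contradiction
        have hclIoc : σ ∈ closure (Set.Ioc σ a) := by
          rw [closure_Ioc (ne_of_lt hσa')]
          exact ⟨le_rfl, hσa'.le⟩
        have hσle : z i σ ≤ bdry :=
          clos_le _ (Set.Ioc σ a) σ bdry (fun u hu => le_trans hσ0 hu.1.le) hσc hclIoc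
            (fun u hu => (hnotB u hu.1 hu.2).le)
        have hσeq : z i σ = bdry := le_antisymm hσle hσge
        have hder2 := hzD i hi1 hi2 σ hσ0
        have hd2 : VV (i+1) σ - VV i σ ≤ 0 :=
          right_viol (z i) _ σ hσ0 (Set.Ioc σ a) (fun u hu => hu.1) hclIoc hder2
            (fun u hu => by rw [hσeq]; exact hnotB u hu.1 hu.2)
        have hVViσ : VV i σ = 0 := hVV0 σ hσeq
        have := hupzpos σ hσpos
        linarith
      · -- σ = 0 : the gap dips immediately ; but the derivative is positive in the dip
        have hzub : ∀ u, 0 < u → u ≤ a → l/(ρmax+δ) < z i u ∧ z i u < bdry := by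
          intro u h1 h2
          have hv1 : z i u < bdry := hnotB u (by rw [← hσ00]; exact h1) h2
          have hd : dist u 0 < ε := by
            rw [Real.dist_eq, sub_zero, abs_of_pos h1]
            linarith
          have h3 := hε (Set.mem_Ici.2 h1.le) hd
          rw [hz00, Real.dist_eq, abs_lt] at h3
          constructor
          · linarith [h3.1]
          · exact hv1
        have hderivpos : ∀ u, 0 < u → u ≤ a → 0 < VV (i+1) u - VV i u := by
          intro u h1 h2
          obtain ⟨hlow, hhigh⟩ := hzub u h1 h2
          have hlpd : 0 < l/(ρmax+δ) := by positivity
          have hzupos : 0 < z i u := lt_trans hlpd hlow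
          have hr1 : ρmax < l / z i u := by
            rw [lt_div_iff₀ hzupos]
            calc ρmax * z i u < ρmax * bdry := by nlinarith
            _ = l := by rw [hbdry]; field_simp
          have hr2 : l / z i u < ρmax + δ := by
            rw [div_lt_iff₀ hzupos]
            calc l = (ρmax + δ) * (l/(ρmax+δ)) := by field_simp
            _ < (ρmax + δ) * z i u := by
                apply mul_lt_mul_of_pos_left hlow
                linarith
          have hneg : v (l / z i u) < 0 := hδ _ hr1 hr2
          have hpos2 : 0 < VV (i+1) u := hupzpos u h1
          rw [hVVi]
          linarith
        have hmono : StrictMonoOn (z i) (Set.Icc 0 a) := by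
          apply strictMonoOn_of_deriv_pos (convex_Icc _ _)
          · exact (hzc i hi1 hi2).mono (fun u hu => hu.1)
          · intro u hu
            rw [interior_Icc] at hu
            have hd := (hzD i hi1 hi2 u hu.1.le).hasDerivAt (Ici_mem_nhds hu.1)
            rw [hd.deriv]
            exact hderivpos u hu.1 hu.2.le
        have hfin := hmono (Set.mem_Icc.2 ⟨le_rfl, ha0.le⟩) (Set.mem_Icc.2 ⟨ha0.le, le_rfl⟩) ha0
        have := haA.2.2
        rw [hz00] at hfin
        linarith
    refine ⟨part1, ?_⟩
    intro t ht
    by_contra hcon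
    push_neg at hcon
    have heq : z i t = bdry := le_antisymm hcon (part1 t ht.le)
    have hd := hzD i hi1 hi2 t ht.le
    have hdle : VV (i+1) t - VV i t ≤ 0 :=
      left_min (z i) _ t ht hd (fun s h0 h1 => by rw [heq]; exact part1 s h0)
    have hVVit : VV i t = 0 := hVV0 t heq
    have := hupzpos t ht
    linarith
  have hQ : ∀ i, 1 ≤ i → i ≤ n - 2 →
      ((∀ t, 0 ≤ t → bdry ≤ z i t) ∧ (∀ t, 0 < t → bdry < z i t)) := by
    have haux : ∀ m i, 1 ≤ i → i ≤ n - 2 → n - 2 - i ≤ m →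
        ((∀ t, 0 ≤ t → bdry ≤ z i t) ∧ (∀ t, 0 < t → bdry < z i t)) := by
      intro m
      induction m with
      | zero => intro i h1 h2 h3; exact hQstep i h1 h2 (Or.inl (by omega))
      | succ k ih =>
        intro i h1 h2 h3
        rcases eq_or_ne i (n-2) with he | hne
        · exact hQstep i h1 h2 (Or.inl he)
        · exact hQstep i h1 h2 (Or.inr ⟨by omega, ih (i+1) (by omega) (by omega) (by omega)⟩)
    exact fun i h1 h2 => haux (n-2-i) i h1 h2 le_rfl
  -- Oleinik functional
  set W : ℕ → ℝ → ℝ := fun i t => t * (VV (i+1) t - VV i t) - z i t with hWdef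
  have hrmem : ∀ j t, bdry ≤ z j t → 0 < l / z j t ∧ l / z j t ≤ ρmax := by
    intro j t hzj
    have hzpos : 0 < z j t := lt_of_lt_of_le hbdrypos hzj
    constructor
    · positivity
    · rw [← hlb]
      exact div_le_div_of_nonneg_left hlpos.le hbdrypos hzj
  -- derivative of the velocity of an inner particle
  have hVVD : ∀ j, 1 ≤ j → j ≤ n - 2 → ∀ t, 0 ≤ t →
      HasDerivWithinAt (VV j)
        (v' (l / z j t) * ((0 * z j t - l * (VV (j+1) t - VV j t)) / (z j t)^2))
        (Set.Ici 0) t := by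
    intro j h1 h2 t ht
    have hzjt := (hQ j h1 h2).1 t ht
    have hzpos : 0 < z j t := lt_of_lt_of_le hbdrypos hzjt
    have hdiv : HasDerivWithinAt (fun s => l / z j s)
        ((0 * z j t - l * (VV (j+1) t - VV j t)) / (z j t)^2) (Set.Ici 0) t :=
      (hasDerivWithinAt_const t _ l).div (hzD j h1 h2 t ht) (ne_of_gt hzpos)
    obtain ⟨hm1, hm2⟩ := hrmem j t hzjt
    have h0 := (hv_deriv _ ⟨hm1.le, hm2⟩).comp_hasDerivWithinAt t hdiv
    exact h0.congr (fun y _ => hVVe j h2 y) (hVVe j h2 t)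
  -- derivative of the leader velocity (or any inner one) : existence
  have hupDex : ∀ i, 1 ≤ i → i ≤ n - 2 → ∀ t, 0 ≤ t →
      ∃ G, HasDerivWithinAt (VV (i+1)) G (Set.Ici 0) t := by
    intro i hi1 hi2 t ht
    rcases eq_or_ne (i+1) (n-1) with h | h
    · refine ⟨0, ?_⟩
      have hfun : VV (i+1) = fun _ => vmax := by
        funext s
        rw [h, hVVlead]
      rw [hfun]
      exact hasDerivWithinAt_const t _ vmax
    · exact ⟨_, hVVD (i+1) (by omega) (by omega) t ht⟩
  have hWc : ∀ i, 1 ≤ i → i ≤ n - 2 → ContinuousOn (W i) (Set.Ici 0) := by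
    intro i hi1 hi2 t ht
    obtain ⟨G, hG⟩ := hupDex i hi1 hi2 t ht
    have hw : HasDerivWithinAt (W i) _ (Set.Ici 0) t :=
      (((hasDerivWithinAt_id t (Set.Ici 0)).mul
        (hG.sub (hVVD i hi1 hi2 t ht))).sub (hzD i hi1 hi2 t ht))
    exact hw.continuousWithinAt
  have hWstep : ∀ i, 1 ≤ i → i ≤ n - 2 →
      (i = n - 2 ∨ (i + 1 ≤ n - 2 ∧ ∀ t, 0 ≤ t → W (i+1) t < 0)) →
      ∀ t, 0 ≤ t → W i t < 0 := by
    intro i hi1 hi2 hup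
    -- the key derivative estimate at a touching time
    have hkey : ∀ τ, 0 < τ → τ * (VV (i+1) τ - VV i τ) = z i τ →
        ∃ G, HasDerivWithinAt (VV (i+1)) G (Set.Ici 0) τ ∧
          τ * G + (l / z i τ) * v' (l / z i τ) < 0 := by
      intro τ hτpos hτu
      have hzge := (hQ i hi1 hi2).1 τ hτpos.le
      have hzipos : 0 < z i τ := lt_of_lt_of_le hbdrypos hzge
      obtain ⟨hRi1, hRi2⟩ := hrmem i τ hzge
      have hv'Ri : v' (l / z i τ) < 0 := hv'_neg _ ⟨hRi1.le, hRi2⟩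
      have hgi : (l / z i τ) * v' (l / z i τ) < 0 := mul_neg_of_pos_of_neg hRi1 hv'Ri
      have hupos : 0 < VV (i+1) τ - VV i τ := by
        have h1 : 0 < τ * (VV (i+1) τ - VV i τ) := by rw [hτu]; exact hzipos
        nlinarith
      rcases hup with h | h
      · refine ⟨0, ?_, by linarith⟩
        have hfun : VV (i+1) = fun _ => vmax := by
          funext s
          rw [show i + 1 = n - 1 by omega, hVVlead]
        rw [hfun]
        exact hasDerivWithinAt_const τ _ vmax
      · obtain ⟨hin, hWIH⟩ := h
        refine ⟨_, hVVD (i+1) (by omega) hin τ hτpos.le, ?_⟩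
        have hz1ge := (hQ (i+1) (by omega) hin).1 τ hτpos.le
        have hz1pos : 0 < z (i+1) τ := lt_of_lt_of_le hbdrypos hz1ge
        obtain ⟨hR11, hR12⟩ := hrmem (i+1) τ hz1ge
        have hv'R1 : v' (l / z (i+1) τ) < 0 := hv'_neg _ ⟨hR11.le, hR12⟩
        have hg1lt : (l / z (i+1) τ) * v' (l / z (i+1) τ) < 0 := mul_neg_of_pos_of_neg hR11 hv'R1
        have hIH : τ * (VV (i+1+1) τ - VV (i+1) τ) < z (i+1) τ := by
          have h2 := hWIH τ hτpos.le
          rw [hWdef] at h2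
          simp only at h2
          linarith
        -- R_{i+1} ≤ R_i
        have hR1Ri : l / z (i+1) τ ≤ l / z i τ := by
          by_contra hc
          push_neg at hc
          have he1 := hVVe (i+1) hin τ
          have he2 := hVVe i hi2 τ
          rw [he1, he2] at hupos
          have := hvanti ⟨hRi1.le, hRi2⟩ ⟨hR11.le, hR12⟩ hc
          linarith
        have hg : (l / z i τ) * v' (l / z i τ) ≤ (l / z (i+1) τ) * v' (l / z (i+1) τ) :=
          hV2 ⟨hR11.le, hR12⟩ ⟨hRi1.le, hRi2⟩ hR1Ri
        -- compute τ * G and bound it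
        have hτG : τ * (v' (l / z (i+1) τ) *
            ((0 * z (i+1) τ - l * (VV (i+1+1) τ - VV (i+1) τ)) / (z (i+1) τ)^2))
            = -(((l / z (i+1) τ) * v' (l / z (i+1) τ)) *
                (τ * (VV (i+1+1) τ - VV (i+1) τ)) / z (i+1) τ) := by
          field_simp
          ring
        rw [hτG]
        have hb1 : -(((l / z (i+1) τ) * v' (l / z (i+1) τ)) *
            (τ * (VV (i+1+1) τ - VV (i+1) τ)) / z (i+1) τ)
            < -((l / z (i+1) τ) * v' (l / z (i+1) τ)) := by
          rw [neg_lt_neg_iff, lt_div_iff₀ hz1pos]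
          exact mul_lt_mul_of_neg_left hIH hg1lt
        linarith
    -- first-touch argument
    intro t₁ ht₁
    by_contra hcon
    push_neg at hcon
    set A := {s : ℝ | 0 ≤ s ∧ s ≤ t₁ ∧ 0 ≤ W i s} with hA
    have hAne : A.Nonempty := ⟨t₁, ht₁, le_rfl, hcon⟩
    have hAbdd : BddBelow A := ⟨0, fun s hs => hs.1⟩
    set τ := sInf A with hτ
    have hτ0 : 0 ≤ τ := le_csInf hAne (fun s hs => hs.1)
    have hτt₁ : τ ≤ t₁ := csInf_le hAbdd ⟨ht₁, le_rfl, hcon⟩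
    have hτcl : τ ∈ closure A := csInf_mem_closure hAne hAbdd
    have hWcτ : ContinuousWithinAt (W i) (Set.Ici 0) τ := hWc i hi1 hi2 τ hτ0
    have hτge : 0 ≤ W i τ :=
      clos_ge _ A τ 0 (fun s hs => hs.1) hWcτ hτcl (fun s hs => hs.2.2)
    have hW0 : W i 0 < 0 := by
      have hz00 := hz0' i hi1 hi2
      rw [hWdef]
      simp only
      rw [zero_mul, zero_sub, neg_lt, neg_zero]
      linarith
    have hτpos : 0 < τ := by
      rcases eq_or_lt_of_le hτ0 with h0 | h0
      · exfalso
        rw [← h0] at hτge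
        linarith
      · exact h0
    have hbefore : ∀ s, 0 ≤ s → s < τ → W i s < 0 := by
      intro s h0 h1
      by_contra hc
      push_neg at hc
      have : s ∈ A := ⟨h0, le_trans h1.le hτt₁, hc⟩
      exact absurd (csInf_le hAbdd this) (not_le.2 h1)
    have hτle : W i τ ≤ 0 := by
      refine clos_le _ (Set.Ico 0 τ) τ 0 (fun s hs => hs.1) hWcτ ?_ ?_
      · rw [closure_Ico (ne_of_lt hτpos)]
        exact ⟨hτ0, le_rfl⟩
      · exact fun s hs => (hbefore s hs.1 hs.2).le
    have hτeq : W i τ = 0 := le_antisymm hτle hτge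
    have hτu : τ * (VV (i+1) τ - VV i τ) = z i τ := by
      rw [hWdef] at hτeq
      simp only at hτeq
      linarith
    obtain ⟨G, hG, hGlt⟩ := hkey τ hτpos hτu
    have hzge := (hQ i hi1 hi2).1 τ hτ0
    have hzipos : 0 < z i τ := lt_of_lt_of_le hbdrypos hzge
    -- derivative of W i at τ
    have hw : HasDerivWithinAt (W i)
        (1 * (VV (i+1) τ - VV i τ) + τ * (G - v' (l / z i τ) *
          ((0 * z i τ - l * (VV (i+1) τ - VV i τ)) / (z i τ)^2)) - (VV (i+1) τ - VV i τ))
        (Set.Ici 0) τ :=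
      ((hasDerivWithinAt_id τ (Set.Ici 0)).mul (hG.sub (hVVD i hi1 hi2 τ hτ0))).sub
        (hzD i hi1 hi2 τ hτ0)
    have hd0 : 0 ≤ 1 * (VV (i+1) τ - VV i τ) + τ * (G - v' (l / z i τ) *
          ((0 * z i τ - l * (VV (i+1) τ - VV i τ)) / (z i τ)^2)) - (VV (i+1) τ - VV i τ) :=
      left_touch _ _ τ hτpos hw (fun s h0 h1 => by rw [hτeq]; exact (hbefore s h0 h1).le)
    have hcomp : 1 * (VV (i+1) τ - VV i τ) + τ * (G - v' (l / z i τ) *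
          ((0 * z i τ - l * (VV (i+1) τ - VV i τ)) / (z i τ)^2)) - (VV (i+1) τ - VV i τ)
        = τ * G + ((l / z i τ) * v' (l / z i τ)) * (τ * (VV (i+1) τ - VV i τ)) / z i τ := by
      field_simp
      ring
    rw [hcomp, hτu] at hd0
    have hfin : ((l / z i τ) * v' (l / z i τ)) * z i τ / z i τ
        = (l / z i τ) * v' (l / z i τ) := by
      field_simp
    rw [hfin] at hd0
    linarith
  have hW : ∀ i, 1 ≤ i → i ≤ n - 2 → ∀ t, 0 ≤ t → W i t < 0 := by
    have haux : ∀ m i, 1 ≤ i → i ≤ n - 2 → n - 2 - i ≤ m → ∀ t, 0 ≤ t → W i t < 0 := by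
      intro m
      induction m with
      | zero => intro i h1 h2 h3; exact hWstep i h1 h2 (Or.inl (by omega))
      | succ k ih =>
        intro i h1 h2 h3
        rcases eq_or_ne i (n-2) with he | hne
        · exact hWstep i h1 h2 (Or.inl he)
        · exact hWstep i h1 h2 (Or.inr ⟨by omega, ih (i+1) (by omega) (by omega) (by omega)⟩)
    exact fun i h1 h2 => haux (n-2-i) i h1 h2 le_rfl
  -- conclusion
  intro t ht
  constructor
  · intro i hi1 hi3
    have h := hW i hi1 (by omega) t ht.le
    rw [hWdef] at h
    simp only at h
    rw [hVVe (i+1) (by omega) t, hVVe i (by omega) t] at h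
    have h211 : i + 1 + 1 = i + 2 := by omega
    simp only [hzdef, h211] at h
    rw [le_div_iff₀ ht]
    nlinarith
  · have h := hW (n-2) (by omega) le_rfl t ht.le
    rw [hWdef] at h
    simp only at h
    have he : n - 2 + 1 = n - 1 := by omega
    rw [he, hVVlead, hVVe (n-2) le_rfl t] at h
    simp only [hzdef, he] at h
    rw [le_div_iff₀ ht]
    nlinarith
end

section
/- Approximation of the initial datum by the follow-the-leader atomization: assume ρ̄ ∈ L¹∩L^∞(ℝ;[0,ρ_max]) has compact support and v satisfies the velocity hypothesis. Then, for every bounded Lipschitz-continuous function φ : ℝ → ℝ, the initial discrete density of the compact-support FTL scheme satisfies ∫_ℝ [ρ̄(x) − ρⁿ(0,x)] φ(x) dx → 0 as n → ∞. -/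
open MeasureTheory Set Filter Topology
open scoped ENNReal NNReal


section FTLAux

lemma iocMono (f : ℝ → ℝ) (hf : Integrable f) (hf0 : ∀ y, 0 ≤ f y) (ξ : ℝ) :
    Monotone (fun y => ∫ s in Set.Ioc ξ y, f s) := by
  intro y y' h
  exact setIntegral_mono_set hf.integrableOn
    (Eventually.of_forall hf0) (HasSubset.Subset.eventuallyLE (Set.Ioc_subset_Ioc_right h))

lemma iocCont (f : ℝ → ℝ) (hf : Integrable f) (ξ : ℝ) :
    Continuous (fun y => ∫ s in Set.Ioc ξ y, f s) := by
  have h1 : Continuous fun y => ∫ s in ξ..y, f s := hf.continuous_primitive ξ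
  have h2 : (fun y => ∫ s in Set.Ioc ξ y, f s) = fun y => ∫ s in ξ..(max ξ y), f s := by
    funext y
    rcases le_total ξ y with h | h
    · rw [max_eq_right h, intervalIntegral.integral_of_le h]
    · rw [max_eq_left h, intervalIntegral.integral_same, Set.Ioc_eq_empty (by simpa using h),
        Measure.restrict_empty, integral_zero_measure]
  rw [h2]
  exact h1.comp (continuous_const.max continuous_id)

lemma supAux (f : ℝ → ℝ) (hf : Integrable f) (hf0 : ∀ y, 0 ≤ f y)
    (ξ B m : ℝ) (hm : 0 < m)
    (hB : ∀ y, B ≤ y → m ≤ ∫ s in Set.Ioc ξ y, f s) :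
    ξ ≤ sSup {y | (∫ s in Set.Ioc ξ y, f s) < m} ∧
    sSup {y | (∫ s in Set.Ioc ξ y, f s) < m} ≤ B ∧
    (∫ s in Set.Ioc ξ (sSup {y | (∫ s in Set.Ioc ξ y, f s) < m}), f s) = m := by
  set H : ℝ → ℝ := fun y => ∫ s in Set.Ioc ξ y, f s with hH
  set S : Set ℝ := {y | H y < m} with hS
  have hmono : Monotone H := iocMono f hf hf0 ξ
  have hcont : Continuous H := iocCont f hf ξ
  have hξS : ξ ∈ S := by
    have : H ξ = 0 := by
      simp [hH, Set.Ioc_self]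
    simpa [hS, this] using hm
  have hSB : S ⊆ Set.Iic B := by
    intro y hy
    by_contra hc
    exact absurd (hB y (le_of_lt (not_le.mp hc))) (not_le.mpr hy)
  have hbdd : BddAbove S := ⟨B, fun y hy => hSB hy⟩
  set s := sSup S with hs
  have hle : ξ ≤ s := le_csSup hbdd hξS
  have hsB : s ≤ B := csSup_le ⟨ξ, hξS⟩ (fun y hy => hSB hy)
  have hlt : ∀ y < s, H y < m := by
    intro y hy
    obtain ⟨z, hzS, hyz⟩ := exists_lt_of_lt_csSup ⟨ξ, hξS⟩ hy
    exact lt_of_le_of_lt (hmono hyz.le) hzS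
  have hgt : ∀ y, s < y → m ≤ H y := by
    intro y hy
    by_contra hc
    exact absurd (le_csSup hbdd (not_le.mp hc : y ∈ S)) (not_le.mpr hy)
  have h1 : H s ≤ m := by
    refine le_of_tendsto (hcont.continuousAt.mono_left (nhdsWithin_le_nhds (s := Set.Iio s))) ?_
    filter_upwards [self_mem_nhdsWithin] with y hy
    exact (hlt y hy).le
  have h2 : m ≤ H s := by
    refine ge_of_tendsto (hcont.continuousAt.mono_left (nhdsWithin_le_nhds (s := Set.Ioi s))) ?_
    filter_upwards [self_mem_nhdsWithin] with y hy
    exact hgt y hy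
  exact ⟨hle, hsB, le_antisymm h1 h2⟩

lemma iocAdd (f : ℝ → ℝ) (hf : Integrable f) {p q r : ℝ} (hpq : p ≤ q) (hqr : q ≤ r) :
    ∫ s in Set.Ioc p r, f s = (∫ s in Set.Ioc p q, f s) + ∫ s in Set.Ioc q r, f s := by
  rw [← intervalIntegral.integral_of_le (hpq.trans hqr), ← intervalIntegral.integral_of_le hpq,
    ← intervalIntegral.integral_of_le hqr,
    intervalIntegral.integral_add_adjacent_intervals hf.intervalIntegrable hf.intervalIntegrable]


lemma suppFacts (f : ℝ → ℝ) (hf : Integrable f) (hsupp : HasCompactSupport f)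
    (hne : ∫ y, f y ≠ 0) :
    sInf (tsupport f) ≤ sSup (tsupport f) ∧
    (∀ y, y ∉ Set.Icc (sInf (tsupport f)) (sSup (tsupport f)) → f y = 0) ∧
    (∫ s in Set.Ioc (sInf (tsupport f)) (sSup (tsupport f)), f s) = ∫ y, f y := by
  have hne' : (tsupport f).Nonempty := by
    by_contra hc
    rw [Set.not_nonempty_iff_eq_empty] at hc
    have : f = 0 := by
      funext y
      by_contra hy
      exact absurd (subset_tsupport f (by simpa using hy)) (by simp [hc])
    exact hne (by simp [this])
  have hbdd : Bornology.IsBounded (tsupport f) := hsupp.isBounded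
  have hicc : tsupport f ⊆ Set.Icc (sInf (tsupport f)) (sSup (tsupport f)) :=
    hbdd.subset_Icc_sInf_sSup
  have hab : sInf (tsupport f) ≤ sSup (tsupport f) :=
    csInf_le_csSup hne' hbdd.bddBelow hbdd.bddAbove
  have hzero : ∀ y, y ∉ Set.Icc (sInf (tsupport f)) (sSup (tsupport f)) → f y = 0 := by
    intro y hy
    exact image_eq_zero_of_notMem_tsupport (fun h => hy (hicc h))
  refine ⟨hab, hzero, ?_⟩
  rw [← MeasureTheory.integral_Icc_eq_integral_Ioc]
  exact setIntegral_eq_integral_of_forall_compl_eq_zero (fun y hy => hzero y hy)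


lemma chainFacts (f : ℝ → ℝ) (hf : Integrable f) (hf0 : ∀ y, 0 ≤ f y)
    (a b L : ℝ) (hab : a ≤ b) (hL : (∫ s in Set.Ioc a b, f s) = L) (hLpos : 0 < L)
    (n : ℕ) (hn : 1 ≤ n) (x : ℕ → ℝ) (hx0 : x 0 = a)
    (hxs : ∀ i, 1 ≤ i → i ≤ n →
      x i = sSup {y : ℝ | (∫ s in Set.Ioc (x (i-1)) y, f s) < L / n}) :
    ∀ i ≤ n, (a ≤ x i ∧ x i ≤ b ∧ (∫ s in Set.Ioc a (x i), f s) = i * (L / n)) ∧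
      (∀ j < i, x j ≤ x (j+1) ∧ (∫ s in Set.Ioc (x j) (x (j+1)), f s) = L / n) := by
  have hnR : (0:ℝ) < n := by exact_mod_cast hn
  have hmn : (0:ℝ) < L / n := div_pos hLpos hnR
  intro i
  induction i with
  | zero =>
    intro _
    refine ⟨⟨hx0.ge, hx0 ▸ hab, ?_⟩, fun j hj => absurd hj (by omega)⟩
    rw [hx0]; simp [Set.Ioc_self]
  | succ i ih =>
    intro hi
    obtain ⟨⟨hax, hxb, hG⟩, hcells⟩ := ih (by omega)
    -- tail mass
    have htail : (∫ s in Set.Ioc (x i) b, f s) = L - i * (L / n) := by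
      have := iocAdd f hf hax hxb
      rw [hL, hG] at this; linarith
    have htail_ge : L / n ≤ ∫ s in Set.Ioc (x i) b, f s := by
      rw [htail]
      have hiℝ : (i:ℝ) ≤ (n:ℝ) - 1 := by
        have : (i:ℝ) + 1 ≤ (n:ℝ) := by exact_mod_cast hi
        linarith
      have : (i:ℝ) * (L / n) ≤ ((n:ℝ) - 1) * (L / n) :=
        mul_le_mul_of_nonneg_right hiℝ hmn.le
      have hnL : (n:ℝ) * (L / n) = L := by field_simp
      nlinarith
    have hB : ∀ y, b ≤ y → L / n ≤ ∫ s in Set.Ioc (x i) y, f s := by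
      intro y hy
      rw [iocAdd f hf hxb hy]
      have h0 : 0 ≤ ∫ s in Set.Ioc b y, f s :=
        setIntegral_nonneg measurableSet_Ioc (fun s _ => hf0 s)
      linarith
    obtain ⟨h1, h2, h3⟩ := supAux f hf hf0 (x i) b (L / n) hmn hB
    have hxeq : x (i+1) = sSup {y : ℝ | (∫ s in Set.Ioc (x i) y, f s) < L / n} := by
      have := hxs (i+1) (by omega) hi
      simpa using this
    rw [← hxeq] at h1 h2 h3
    have hax' : a ≤ x (i+1) := hax.trans h1
    have hG' : (∫ s in Set.Ioc a (x (i+1)), f s) = ((i+1:ℕ):ℝ) * (L / n) := by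
      rw [iocAdd f hf hax h1, hG, h3]; push_cast; ring_nf
    refine ⟨⟨hax', h2, hG'⟩, fun j hj => ?_⟩
    rcases Nat.lt_or_ge j i with h | h
    · exact hcells j h
    · have : j = i := by omega
      subst this
      exact ⟨h1, h3⟩


lemma mainEst (f : ℝ → ℝ) (hf : Integrable f) (hf0 : ∀ y, 0 ≤ f y)
    (φ : ℝ → ℝ) (K : ℝ≥0) (hφ : LipschitzWith K φ)
    (Mφ : ℝ) (hφ_bdd : ∀ y, |φ y| ≤ Mφ)
    (L : ℝ) (hLpos : 0 < L) (a b : ℝ) (hab : a ≤ b)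
    (hzero : ∀ y, y ∉ Set.Icc a b → f y = 0)
    (n : ℕ) (hn : 1 ≤ n) (x : ℕ → ℝ) (hx0 : x 0 = a) (hxnb : x n ≤ b)
    (hGn : (∫ s in Set.Ioc a (x n), f s) = L)
    (hIab : (∫ s in Set.Ioc a b, f s) = L)
    (hchain : ∀ j < n, x j ≤ x (j+1) ∧ (∫ s in Set.Ioc (x j) (x (j+1)), f s) = L / n) :
    |∫ y, (f y - (∑ i ∈ Finset.range n,
        Set.indicator (Set.Ico (x i) (x (i+1)))
          (fun _ => (L / n) / (x (i+1) - x i)) y)) * φ y|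
      ≤ 2 * K * L * (b - a) / n := by
  have hnR : (0:ℝ) < n := by exact_mod_cast hn
  have hmn : (0:ℝ) < L / n := div_pos hLpos hnR
  set c : ℕ → ℝ := fun i => (L / n) / (x (i+1) - x i) with hc
  set Δ : ℕ → ℝ := fun i => x (i+1) - x i with hΔ
  -- strict increase of cells
  have hstrict : ∀ j < n, 0 < Δ j := by
    intro j hj
    obtain ⟨h1, h2⟩ := hchain j hj
    rcases lt_or_eq_of_le h1 with h | h
    · simpa [hΔ] using sub_pos.mpr h
    · exfalso
      rw [← h] at h2
      simp [Set.Ioc_self] at h2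
      exact absurd h2.symm (ne_of_gt hmn)
  have hcpos : ∀ j < n, 0 < c j := fun j hj => div_pos hmn (hstrict j hj)
  have hcΔ : ∀ j < n, c j * Δ j = L / n := fun j hj =>
    div_mul_cancel₀ _ (ne_of_gt (hstrict j hj))
  -- integrability of f * φ
  have hφc : Continuous φ := hφ.continuous
  have hfφ : Integrable (fun y => f y * φ y) := by
    have := hf.bdd_mul (c := Mφ) hφc.aestronglyMeasurable (Eventually.of_forall fun y => by
      simpa [Real.norm_eq_abs] using hφ_bdd y)
    simpa [mul_comm] using this
  -- integrability of each indicator piece times φ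
  have hterm_int : ∀ i, Integrable (fun y =>
      Set.indicator (Set.Ico (x i) (x (i+1))) (fun _ => c i) y * φ y) := by
    intro i
    have h1 : (fun y => Set.indicator (Set.Ico (x i) (x (i+1))) (fun _ => c i) y * φ y)
        = fun y => Set.indicator (Set.Ico (x i) (x (i+1))) (fun y => c i * φ y) y := by
      funext y
      rw [Set.indicator_mul_left]
    rw [h1]
    refine (IntegrableOn.integrable_indicator ?_ measurableSet_Ico)
    exact ((continuous_const.mul hφc).integrableOn_Icc).mono_set Set.Ico_subset_Icc_self
  -- f vanishes ae on tail Ioc (x n) b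
  have h0xn : a ≤ x n := by
    have : ∀ j ≤ n, x 0 ≤ x j := by
      intro j hj
      induction j with
      | zero => exact le_refl _
      | succ j ih => exact (ih (by omega)).trans (hchain j (by omega)).1
    simpa [hx0] using this n (le_refl n)
  have htail0 : (∫ s in Set.Ioc (x n) b, f s) = 0 := by
    have := iocAdd f hf h0xn hxnb
    rw [hIab, hGn] at this; linarith
  have htail_ae : f =ᵐ[volume.restrict (Set.Ioc (x n) b)] 0 :=
    (integral_eq_zero_iff_of_nonneg_ae (Eventually.of_forall hf0)
      hf.integrableOn).mp htail0
  -- decompose ∫ f φ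
  have hA : (∫ y, f y * φ y)
      = ∑ i ∈ Finset.range n, ∫ y in Set.Ioc (x i) (x (i+1)), f y * φ y := by
    have e1 : (∫ y, f y * φ y) = ∫ y in Set.Ioc a b, f y * φ y := by
      rw [← MeasureTheory.integral_Icc_eq_integral_Ioc]
      exact (setIntegral_eq_integral_of_forall_compl_eq_zero
        (fun y hy => by rw [hzero y hy, zero_mul])).symm
    have e2 : (∫ y in Set.Ioc a b, f y * φ y)
        = (∫ y in Set.Ioc a (x n), f y * φ y) + ∫ y in Set.Ioc (x n) b, f y * φ y :=
      iocAdd _ hfφ h0xn hxnb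
    have e3 : (∫ y in Set.Ioc (x n) b, f y * φ y) = 0 := by
      refine integral_eq_zero_of_ae ?_
      filter_upwards [htail_ae] with y hy
      simp [hy]
    have e4 : (∫ y in Set.Ioc a (x n), f y * φ y)
        = ∑ i ∈ Finset.range n, ∫ y in Set.Ioc (x i) (x (i+1)), f y * φ y := by
      rw [← hx0]
      rw [← intervalIntegral.integral_of_le (hx0 ▸ h0xn)]
      rw [← intervalIntegral.sum_integral_adjacent_intervals
        (fun k _ => hfφ.intervalIntegrable)]
      refine Finset.sum_congr rfl (fun i hi => ?_)
      rw [intervalIntegral.integral_of_le (hchain i (Finset.mem_range.mp hi)).1]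
    rw [e1, e2, e3, e4, add_zero]
  -- integral of D * φ
  have hB : (∫ y, (∑ i ∈ Finset.range n,
      Set.indicator (Set.Ico (x i) (x (i+1))) (fun _ => c i) y) * φ y)
      = ∑ i ∈ Finset.range n, c i * ∫ y in Set.Ioc (x i) (x (i+1)), φ y := by
    have e0 : (fun y => (∑ i ∈ Finset.range n,
        Set.indicator (Set.Ico (x i) (x (i+1))) (fun _ => c i) y) * φ y)
        = fun y => ∑ i ∈ Finset.range n,
          Set.indicator (Set.Ico (x i) (x (i+1))) (fun _ => c i) y * φ y := by
      funext y; rw [Finset.sum_mul]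
    rw [e0, integral_finset_sum _ (fun i _ => hterm_int i)]
    refine Finset.sum_congr rfl (fun i _ => ?_)
    have h1 : (fun y => Set.indicator (Set.Ico (x i) (x (i+1))) (fun _ => c i) y * φ y)
        = fun y => Set.indicator (Set.Ico (x i) (x (i+1))) (fun y => c i * φ y) y := by
      funext y; rw [Set.indicator_mul_left]
    rw [h1, integral_indicator measurableSet_Ico,
      MeasureTheory.integral_Ico_eq_integral_Ioo,
      ← MeasureTheory.integral_Ioc_eq_integral_Ioo, MeasureTheory.integral_const_mul]

  -- per-cell identity and bound
  have hcell_bound : ∀ i ∈ Finset.range n,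
      |(∫ y in Set.Ioc (x i) (x (i+1)), f y * φ y)
        - c i * ∫ y in Set.Ioc (x i) (x (i+1)), φ y|
        ≤ 2 * K * (L / n) * Δ i := by
    intro i hi
    have hin : i < n := Finset.mem_range.mp hi
    have hxi : x i ≤ x (i+1) := (hchain i hin).1
    have cell : (∫ s in Set.Ioc (x i) (x (i+1)), f s) = L / n := (hchain i hin).2
    set s : Set ℝ := Set.Ioc (x i) (x (i+1)) with hs
    have hμs : (volume s).toReal = Δ i := by
      rw [hs, Real.volume_Ioc, ENNReal.toReal_ofReal (by simpa [hΔ] using sub_nonneg.mpr hxi)]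
    have hffin : IntegrableOn f s := hf.integrableOn
    have hfφfin : IntegrableOn (fun y => f y * φ y) s := hfφ.integrableOn
    have hφfin : IntegrableOn φ s :=
      (hφc.integrableOn_Icc).mono_set Set.Ioc_subset_Icc_self
    have hconst : IntegrableOn (fun _ : ℝ => c i * φ (x i)) s :=
      integrableOn_const (by rw [hs, Real.volume_Ioc]; exact ENNReal.ofReal_ne_top)
    have I1 : IntegrableOn (fun y => f y * φ y - c i * φ y) s :=
      hfφfin.sub (hφfin.const_mul _)
    have I2 : IntegrableOn (fun y => f y * φ (x i) - c i * φ (x i)) s :=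
      (hffin.mul_const _).sub hconst
    have hgint : IntegrableOn (fun y => (f y - c i) * (φ y - φ (x i))) s := by
      have : (fun y => (f y - c i) * (φ y - φ (x i)))
          = fun y => (f y * φ y - c i * φ y) - (f y * φ (x i) - c i * φ (x i)) := by
        funext y; ring
      rw [this]; exact I1.sub I2
    have hI2val : (∫ y in s, (f y * φ (x i) - c i * φ (x i))) = 0 := by
      rw [integral_sub (hffin.mul_const _) hconst, MeasureTheory.integral_mul_const,
        setIntegral_const, measureReal_def, hμs, cell, smul_eq_mul]
      linear_combination (-(φ (x i))) * hcΔ i hin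
    have hEeq : (∫ y in s, f y * φ y) - c i * (∫ y in s, φ y)
        = ∫ y in s, (f y - c i) * (φ y - φ (x i)) := by
      have e : (fun y => (f y - c i) * (φ y - φ (x i)))
          = fun y => (f y * φ y - c i * φ y) - (f y * φ (x i) - c i * φ (x i)) := by
        funext y; ring
      rw [e, integral_sub I1 I2, hI2val, sub_zero,
        integral_sub hfφfin (hφfin.const_mul _), MeasureTheory.integral_const_mul]
    rw [hEeq]
    -- bound the integral
    have habs : |∫ y in s, (f y - c i) * (φ y - φ (x i))|
        ≤ ∫ y in s, |(f y - c i) * (φ y - φ (x i))| := by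
      simpa only [Real.norm_eq_abs] using
        norm_integral_le_integral_norm (μ := volume.restrict s)
          (f := fun y => (f y - c i) * (φ y - φ (x i)))
    have hbound_int : IntegrableOn (fun y => (K * Δ i) * (f y + c i)) s :=
      ((hffin.add (integrableOn_const
        (by rw [hs, Real.volume_Ioc]; exact ENNReal.ofReal_ne_top))).const_mul _)
    have hptwise : ∀ y ∈ s, |(f y - c i) * (φ y - φ (x i))| ≤ (K * Δ i) * (f y + c i) := by
      intro y hy
      rw [abs_mul]
      have h1 : |f y - c i| ≤ f y + c i := by
        calc |f y - c i| ≤ |f y| + |c i| := abs_sub _ _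
        _ = f y + c i := by
          rw [abs_of_nonneg (hf0 y), abs_of_nonneg (hcpos i hin).le]
      have h2 : |φ y - φ (x i)| ≤ K * Δ i := by
        have := hφ.dist_le_mul y (x i)
        rw [Real.dist_eq, Real.dist_eq] at this
        refine this.trans ?_
        have hy1 : x i < y := hy.1
        have hy2 : y ≤ x (i+1) := hy.2
        have : |y - x i| ≤ Δ i := by
          rw [abs_of_nonneg (by linarith)]
          simp only [hΔ]; linarith
        exact mul_le_mul_of_nonneg_left this (K.coe_nonneg)
      calc |f y - c i| * |φ y - φ (x i)| ≤ (f y + c i) * (K * Δ i) := by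
            refine mul_le_mul h1 h2 (abs_nonneg _) ?_
            exact add_nonneg (hf0 y) (hcpos i hin).le
      _ = (K * Δ i) * (f y + c i) := by ring
    have hmono_int : (∫ y in s, |(f y - c i) * (φ y - φ (x i))|)
        ≤ ∫ y in s, (K * Δ i) * (f y + c i) :=
      setIntegral_mono_on hgint.abs hbound_int measurableSet_Ioc hptwise
    have hval : (∫ y in s, (K * Δ i) * (f y + c i)) = 2 * K * (L / n) * Δ i := by
      rw [MeasureTheory.integral_const_mul, integral_add hffin (integrableOn_const
        (by rw [hs, Real.volume_Ioc]; exact ENNReal.ofReal_ne_top)),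
        cell, setIntegral_const, measureReal_def, hμs, smul_eq_mul]
      linear_combination (↑K * Δ i) * hcΔ i hin
    calc |∫ y in s, (f y - c i) * (φ y - φ (x i))|
        ≤ ∫ y in s, |(f y - c i) * (φ y - φ (x i))| := habs
      _ ≤ ∫ y in s, (K * Δ i) * (f y + c i) := hmono_int
      _ = 2 * K * (L / n) * Δ i := hval
  -- put everything together
  have hDφ_int : Integrable (fun y => (∑ i ∈ Finset.range n,
      Set.indicator (Set.Ico (x i) (x (i+1))) (fun _ => c i) y) * φ y) := by
    have e0 : (fun y => (∑ i ∈ Finset.range n,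
        Set.indicator (Set.Ico (x i) (x (i+1))) (fun _ => c i) y) * φ y)
        = fun y => ∑ i ∈ Finset.range n,
          Set.indicator (Set.Ico (x i) (x (i+1))) (fun _ => c i) y * φ y := by
      funext y; rw [Finset.sum_mul]
    rw [e0]
    exact integrable_finset_sum _ (fun i _ => hterm_int i)
  have hsplit : (∫ y, (f y - (∑ i ∈ Finset.range n,
      Set.indicator (Set.Ico (x i) (x (i+1))) (fun _ => c i) y)) * φ y)
      = (∫ y, f y * φ y) - ∫ y, (∑ i ∈ Finset.range n,
        Set.indicator (Set.Ico (x i) (x (i+1))) (fun _ => c i) y) * φ y := by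
    rw [← integral_sub hfφ hDφ_int]
    congr 1; funext y; ring
  rw [hsplit, hA, hB, ← Finset.sum_sub_distrib]
  calc |∑ i ∈ Finset.range n, ((∫ y in Set.Ioc (x i) (x (i+1)), f y * φ y)
        - c i * ∫ y in Set.Ioc (x i) (x (i+1)), φ y)|
      ≤ ∑ i ∈ Finset.range n, |(∫ y in Set.Ioc (x i) (x (i+1)), f y * φ y)
        - c i * ∫ y in Set.Ioc (x i) (x (i+1)), φ y| := Finset.abs_sum_le_sum_abs _ _
    _ ≤ ∑ i ∈ Finset.range n, 2 * K * (L / n) * Δ i :=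
        Finset.sum_le_sum hcell_bound
    _ = 2 * K * (L / n) * (x n - x 0) := by
        rw [← Finset.mul_sum]
        congr 1
        simpa [hΔ] using Finset.sum_range_sub x n
    _ ≤ 2 * K * L * (b - a) / n := by
        have hxx : x n - x 0 ≤ b - a := by rw [hx0]; linarith
        have hfac : (0:ℝ) ≤ 2 * K * (L / n) := by positivity
        calc 2 * ↑K * (L / ↑n) * (x n - x 0) ≤ 2 * ↑K * (L / ↑n) * (b - a) :=
              mul_le_mul_of_nonneg_left hxx hfac
          _ = 2 * ↑K * L * (b - a) / ↑n := by ring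

end FTLAux

/-- Initial discrete density of the compact-support follow-the-leader atomization. -/
noncomputable def initDens (L : ℝ) (xbar : ℕ → ℕ → ℝ) (n : ℕ) (y : ℝ) : ℝ :=
  ∑ i ∈ Finset.range n,
    Set.indicator (Set.Ico (xbar n i) (xbar n (i+1)))
      (fun _ => (L / n) / (xbar n (i+1) - xbar n i)) y

/-- **Approximation of the initial datum by the follow-the-leader atomization.**
For every bounded Lipschitz `φ : ℝ → ℝ` one has
`∫ (ρ̄(x) − ρⁿ(0,x)) φ(x) dx → 0` as `n → ∞`. -/
theorem stmt7
    -- velocity hypothesis (V1)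
    (ρmax vmax : ℝ) (hρmax : 0 < ρmax) (hvmaxpos : 0 < vmax)
    (v v' : ℝ → ℝ)
    (hv_deriv : ∀ r ∈ Set.Icc (0:ℝ) ρmax, HasDerivAt v (v' r) r)
    (hv'_cont : ContinuousOn v' (Set.Icc (0:ℝ) ρmax))
    (hv'_neg : ∀ r ∈ Set.Icc (0:ℝ) ρmax, v' r < 0)
    (hv_range : ∀ r ∈ Set.Icc (0:ℝ) ρmax, v r ∈ Set.Icc (0:ℝ) vmax)
    (hv0 : v 0 = vmax) (hvρmax : v ρmax = 0)
    -- initial datum (I1), compactly supported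
    (rbar : ℝ → ℝ) (hrbar_int : Integrable rbar)
    (hrbar_range : ∀ y, rbar y ∈ Set.Icc (0:ℝ) ρmax)
    (hrbar_supp : HasCompactSupport rbar)
    (L R : ℝ) (hL : L = ∫ y, rbar y) (hLpos : 0 < L)
    (hR : eLpNorm rbar ⊤ volume = ENNReal.ofReal R) (hRpos : 0 < R)
    -- atomization of the initial datum, for every n ≥ 1
    (xbar : ℕ → ℕ → ℝ)
    (hxbar0 : ∀ n, 1 ≤ n → xbar n 0 = sInf (tsupport rbar))
    (hxbar : ∀ n, 1 ≤ n → ∀ i, 1 ≤ i → i ≤ n →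
        xbar n i = sSup {y : ℝ | (∫ s in Set.Ioc (xbar n (i-1)) y, rbar s) < L / n})
    -- bounded Lipschitz test function
    (φ : ℝ → ℝ) (K : ℝ≥0) (hφ_lip : LipschitzWith K φ)
    (Mφ : ℝ) (hφ_bdd : ∀ y, |φ y| ≤ Mφ) :
    Tendsto (fun n : ℕ => ∫ y, (rbar y - initDens L xbar n y) * φ y)
      atTop (nhds 0) := by
  have hf0 : ∀ y, 0 ≤ rbar y := fun y => (hrbar_range y).1
  set a := sInf (tsupport rbar) with ha
  set b := sSup (tsupport rbar) with hb
  obtain ⟨hab, hzero, hIab⟩ := suppFacts rbar hrbar_int hrbar_supp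
    (by rw [← hL]; exact hLpos.ne')
  have hIabL : (∫ s in Set.Ioc a b, rbar s) = L := by rw [hIab, ← hL]
  refine squeeze_zero_norm' ?_ (tendsto_const_div_atTop_nhds_zero_nat (2 * K * L * (b - a)))
  filter_upwards [eventually_ge_atTop 1] with n hn
  have hnne : ((n:ℝ)) ≠ 0 := by
    have : (0:ℝ) < n := by exact_mod_cast hn
    exact this.ne'
  have hch := chainFacts rbar hrbar_int hf0 a b L hab hIabL hLpos n hn (xbar n)
    (hxbar0 n hn) (fun i h1 h2 => hxbar n hn i h1 h2)
  obtain ⟨⟨_, hxnb, hGn⟩, hcells⟩ := hch n (le_refl n)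
  have hGnL : (∫ s in Set.Ioc a (xbar n n), rbar s) = L := by
    rw [hGn]; field_simp
  have hmain := mainEst rbar hrbar_int hf0 φ K hφ_lip Mφ hφ_bdd L hLpos a b hab hzero
    n hn (xbar n) (hxbar0 n hn) hxnb hGnL hIabL (fun j hj => hcells j hj)
  simpa only [initDens, Real.norm_eq_abs] using hmain
end

section
/- Discrete entropy-sign inequality: let v ∈ C¹([0,ρ_max];[0,v_max]) with v' < 0, v(0) = v_max, v(ρ_max) = 0, let k ∈ [0,ρ_max], let R₀,…,R_{n−1} ∈ [0,ρ_max] and let φ₀,…,φₙ ≥ 0. Then k·[ Σ_{i=1}^{n−1} (sign(R_{i−1}−k) − sign(R_i−k))·(v(R_i)−v(k))·φ_i + (1 + sign(R₀−k))·(v(k)−v(R₀))·φ₀ + (1 + sign(R_{n−1}−k))·(v_max−v(k))·φₙ ] ≥ 0, where sign denotes the sign function with sign(0) = 0. -/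
open MeasureTheory Set Filter Topology

/-- **Discrete entropy-sign inequality.**  Let `v ∈ C¹([0,ρmax];[0,vmax])` with `v' < 0`,
`v 0 = vmax`, `v ρmax = 0`, let `k ∈ [0,ρmax]`, let `R 0, …, R (n-1) ∈ [0,ρmax]` and let
`φ 0, …, φ n ≥ 0`.  Then the boundary terms arising in the discrete Kruzhkov entropy
computation for the follow-the-leader scheme are nonnegative. -/
theorem stmt8
    (ρmax vmax : ℝ) (hρmax : 0 < ρmax) (hvmaxpos : 0 < vmax)
    (v v' : ℝ → ℝ)
    (hv_deriv : ∀ r ∈ Set.Icc (0:ℝ) ρmax, HasDerivAt v (v' r) r)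
    (hv'_cont : ContinuousOn v' (Set.Icc (0:ℝ) ρmax))
    (hv'_neg : ∀ r ∈ Set.Icc (0:ℝ) ρmax, v' r < 0)
    (hv_range : ∀ r ∈ Set.Icc (0:ℝ) ρmax, v r ∈ Set.Icc (0:ℝ) vmax)
    (hv0 : v 0 = vmax) (hvρmax : v ρmax = 0)
    (k : ℝ) (hk : k ∈ Set.Icc (0:ℝ) ρmax)
    (n : ℕ) (hn : 1 ≤ n)
    (R : ℕ → ℝ) (hR : ∀ i, i < n → R i ∈ Set.Icc (0:ℝ) ρmax)
    (φ : ℕ → ℝ) (hφ : ∀ i, i ≤ n → 0 ≤ φ i) :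
    0 ≤ k * ((∑ i ∈ Finset.Icc 1 (n-1),
        (Real.sign (R (i-1) - k) - Real.sign (R i - k)) * (v (R i) - v k) * φ i)
      + (1 + Real.sign (R 0 - k)) * (v k - v (R 0)) * φ 0
      + (1 + Real.sign (R (n-1) - k)) * (vmax - v k) * φ n) := by
  -- v is strictly antitone on [0, ρmax]
  have hanti : StrictAntiOn v (Set.Icc (0:ℝ) ρmax) := by
    apply StrictAntiOn.mono (s := Set.Icc (0:ℝ) ρmax) ?_ (le_refl _)
    apply strictAntiOn_of_deriv_neg (convex_Icc _ _)
    · exact fun x hx => (hv_deriv x hx).continuousAt.continuousWithinAt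
    · intro x hx
      rw [interior_Icc] at hx
      have hx' : x ∈ Set.Icc (0:ℝ) ρmax := ⟨hx.1.le, hx.2.le⟩
      rw [(hv_deriv x hx').deriv]
      exact hv'_neg x hx'
  have hsign_bound : ∀ x : ℝ, Real.sign x ≤ 1 ∧ -1 ≤ Real.sign x := by
    intro x
    rcases lt_trichotomy x 0 with h | h | h
    · rw [Real.sign_of_neg h]; norm_num
    · rw [h, Real.sign_zero]; norm_num
    · rw [Real.sign_of_pos h]; norm_num
  apply mul_nonneg hk.1
  have hmid : ∀ a b : ℝ, a ∈ Set.Icc (0:ℝ) ρmax → b ∈ Set.Icc (0:ℝ) ρmax →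
      0 ≤ (Real.sign (a - k) - Real.sign (b - k)) * (v b - v k) := by
    intro a b ha hb
    rcases lt_trichotomy b k with h | h | h
    · have h1 : Real.sign (b - k) = -1 := Real.sign_of_neg (by linarith)
      have h2 : v k < v b := hanti hb hk h
      have := (hsign_bound (a - k)).2
      nlinarith
    · subst h; simp
    · have h1 : Real.sign (b - k) = 1 := Real.sign_of_pos (by linarith)
      have h2 : v b < v k := hanti hk hb h
      have := (hsign_bound (a - k)).1
      nlinarith
  have hb0 : 0 ≤ (1 + Real.sign (R 0 - k)) * (v k - v (R 0)) := by
    have hR0 := hR 0 hn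
    rcases lt_trichotomy (R 0) k with h | h | h
    · rw [Real.sign_of_neg (by linarith)]; ring_nf; simp
    · rw [h]; simp
    · have h1 : Real.sign (R 0 - k) = 1 := Real.sign_of_pos (by linarith)
      have h2 : v (R 0) < v k := hanti hk hR0 h
      rw [h1]; nlinarith
  have hbn : 0 ≤ (1 + Real.sign (R (n-1) - k)) * (vmax - v k) := by
    have h1 : -1 ≤ Real.sign (R (n-1) - k) := (hsign_bound _).2
    have h2 : v k ≤ vmax := by
      rcases eq_or_lt_of_le hk.1 with h | h
      · rw [← h, hv0]
      · have : v k < v 0 := hanti (by simp [hρmax.le]) hk h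
        rw [hv0] at this; linarith
    nlinarith
  have hsum : 0 ≤ ∑ i ∈ Finset.Icc 1 (n-1),
      (Real.sign (R (i-1) - k) - Real.sign (R i - k)) * (v (R i) - v k) * φ i := by
    apply Finset.sum_nonneg
    intro i hi
    rw [Finset.mem_Icc] at hi
    have hi1 : i < n := lt_of_le_of_lt hi.2 (Nat.sub_lt (by omega) one_pos)
    have hi2 : i - 1 < n := by omega
    exact mul_nonneg (hmid _ _ (hR _ hi2) (hR _ hi1)) (hφ i hi1.le)
  have h1 : 0 ≤ (1 + Real.sign (R 0 - k)) * (v k - v (R 0)) * φ 0 :=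
    mul_nonneg hb0 (hφ 0 (by omega))
  have h2 : 0 ≤ (1 + Real.sign (R (n-1) - k)) * (vmax - v k) * φ n :=
    mul_nonneg hbn (hφ n le_rfl)
  linarith
end

section
/- Discrete maximum–minimum principle for the follow-the-leader scheme with boundary data: let v satisfy the velocity hypothesis, let 0 < δ ≤ R ≤ ρ_max, ℓ > 0, ρ̂ ∈ [δ,R], and let y₀ < y₁ < … < y_M solve ẏᵢ(t) = v(ℓ/(yᵢ₊₁(t) − yᵢ(t))) for i = 0,…,M−1 and ẏ_M(t) = v(ρ̂), with initial gaps satisfying ℓ/R ≤ yᵢ₊₁(0) − yᵢ(0) ≤ ℓ/δ for all i. Then ℓ/R ≤ yᵢ₊₁(t) − yᵢ(t) ≤ ℓ/δ for all t ≥ 0 and all i ∈ {0,…,M−1}. -/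
open MeasureTheory Set Filter Topology

/-- Scalar barrier lemma: a single gap whose leader speed stays in `[v R, v δ]`
remains in `[ℓ/R, ℓ/δ]`. -/
private lemma flKey
    (ρmax vmax : ℝ) (hρmax : 0 < ρmax)
    (v v' : ℝ → ℝ)
    (hv_deriv : ∀ r ∈ Set.Icc (0:ℝ) ρmax, HasDerivAt v (v' r) r)
    (hv'_neg : ∀ r ∈ Set.Icc (0:ℝ) ρmax, v' r < 0)
    (hv_range : ∀ r ∈ Set.Icc (0:ℝ) ρmax, v r ∈ Set.Icc (0:ℝ) vmax)
    (hvρmax : v ρmax = 0)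
    (δ R ℓ : ℝ) (hδ : 0 < δ) (hδR : δ ≤ R) (hRρmax : R ≤ ρmax) (hℓ : 0 < ℓ)
    (f w : ℝ → ℝ)
    (hw : ∀ t, 0 ≤ t → v R ≤ w t ∧ w t ≤ v δ)
    (hf' : ∀ t, 0 ≤ t → HasDerivWithinAt f (w t - v (ℓ / f t)) (Set.Ici 0) t)
    (hf0 : ℓ / R ≤ f 0 ∧ f 0 ≤ ℓ / δ) :
    ∀ t, 0 ≤ t → ℓ / R ≤ f t ∧ f t ≤ ℓ / δ := by
  have hR : 0 < R := lt_of_lt_of_le hδ hδR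
  have hδρ : δ ≤ ρmax := le_trans hδR hRρmax
  -- continuity of v on [0, ρmax]
  have hvcont : ContinuousOn v (Set.Icc 0 ρmax) := fun r hr =>
    (hv_deriv r hr).continuousAt.continuousWithinAt
  -- v is strictly antitone on [0, ρmax]
  have sa : StrictAntiOn v (Set.Icc 0 ρmax) := by
    apply strictAntiOn_of_deriv_neg (convex_Icc _ _) hvcont
    intro x hx
    rw [interior_Icc] at hx
    have hx' : x ∈ Set.Icc (0:ℝ) ρmax := ⟨hx.1.le, hx.2.le⟩
    rw [(hv_deriv x hx').deriv]
    exact hv'_neg x hx'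
  -- there is η > 0 with v r < 0 for ρmax < r < ρmax + η
  obtain ⟨η, hη, hηneg⟩ : ∃ η > 0, ∀ r, ρmax < r → r < ρmax + η → v r < 0 := by
    have hd := hv_deriv ρmax ⟨hρmax.le, le_refl _⟩
    rw [hasDerivAt_iff_tendsto_slope] at hd
    have hev : ∀ᶠ r in 𝓝[≠] ρmax, slope v ρmax r < 0 :=
      hd.eventually_lt_const (hv'_neg ρmax ⟨hρmax.le, le_refl _⟩)
    rw [eventually_nhdsWithin_iff] at hev
    rw [Metric.eventually_nhds_iff] at hev
    obtain ⟨ε, hε, hball⟩ := hev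
    refine ⟨ε, hε, fun r hr1 hr2 => ?_⟩
    have hdist : dist r ρmax < ε := by
      rw [Real.dist_eq, abs_of_pos (by linarith)]; linarith
    have hne : r ∈ ({ρmax}ᶜ : Set ℝ) := by
      simp only [Set.mem_compl_iff, Set.mem_singleton_iff]; intro h; linarith
    have hslope := hball hdist hne
    rw [slope_def_field] at hslope
    have hpos : 0 < r - ρmax := by linarith
    rw [div_neg_iff] at hslope
    rcases hslope with ⟨_, h2⟩ | ⟨h1, _⟩
    · linarith
    · linarith [hvρmax, h1]
  -- continuity of f on [0, t]
  have hfc : ∀ t : ℝ, ContinuousOn f (Set.Icc 0 t) := fun t x hx =>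
    ((hf' x hx.1).continuousWithinAt).mono (fun z hz => hz.1)
  have hfd : ∀ t : ℝ, ∀ x ∈ Set.Ico (0:ℝ) t,
      HasDerivWithinAt f (w x - v (ℓ / f x)) (Set.Ici x) x := fun t x hx =>
    (hf' x hx.1).mono (fun z hz => le_trans hx.1 hz)
  have hℓδ : 0 < ℓ / δ := div_pos hℓ hδ
  have hℓR : 0 < ℓ / R := div_pos hℓ hR
  intro t ht
  constructor
  · -- lower bound
    have hρη : 0 < ρmax + η := by linarith
    obtain ⟨ε₀, hε₀, H⟩ : ∃ ε₀ : ℝ, 0 < ε₀ ∧ ∀ ε, 0 < ε → ε < ε₀ → ℓ / R - ε ≤ f t := by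
      refine ⟨ℓ / R - ℓ / (ρmax + η), ?_, ?_⟩
      · have : ℓ / (ρmax + η) < ℓ / R := div_lt_div_of_pos_left hℓ hR (by linarith)
        linarith
      intro ε hε hεlt
      set c : ℝ := ℓ / R - ε with hcdef
      have hc1 : ℓ / (ρmax + η) < c := by simp only [hcdef] at *; linarith
      have hc0 : 0 < c := lt_trans (div_pos hℓ hρη) hc1
      have hcR : c < ℓ / R := by simp [hcdef]; linarith
      -- apply the fencing theorem to -f with boundary -c
      have key : ∀ x ∈ Set.Ico (0:ℝ) t, (fun s => -f s) x = (fun _ : ℝ => -c) x →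
          -(w x - v (ℓ / f x)) < (0:ℝ) := by
        intro x hx hfx
        have hfxc : f x = c := by
          have := hfx; simp only [neg_inj] at this; exact this
        set r : ℝ := ℓ / c with hrdef
        have hrR : R < r := by
          rw [hrdef]
          calc R = ℓ / (ℓ / R) := by field_simp
          _ < ℓ / c := div_lt_div_of_pos_left hℓ hc0 hcR
        have hrη : r < ρmax + η := by
          rw [hrdef]
          calc ℓ / c < ℓ / (ℓ / (ρmax + η)) :=
                div_lt_div_of_pos_left hℓ (div_pos hℓ hρη) hc1
          _ = ρmax + η := by field_simp
        have hvr : v r < v R := by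
          rcases le_or_gt r ρmax with hcase | hcase
          · exact sa ⟨hδ.le.trans hδR, hRρmax⟩ ⟨by linarith, hcase⟩ hrR
          · exact lt_of_lt_of_le (hηneg r hcase hrη)
              (hv_range R ⟨by linarith, hRρmax⟩).1
        have hwx := (hw x hx.1).1
        rw [hfxc, ← hrdef]
        linarith
      have := image_le_of_deriv_right_lt_deriv_boundary'
        (f := fun s => -f s) (f' := fun x => -(w x - v (ℓ / f x)))
        (a := 0) (b := t) (B := fun _ => -c) (B' := fun _ => 0)
        (fun x hx => ((hfc t) x hx).neg)
        (fun x hx => ((hfd t) x hx).neg)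
        (by simpa using neg_le_neg (le_trans (by simp [hcdef]; linarith) hf0.1))
        continuousOn_const
        (fun x _ => hasDerivWithinAt_const x _ (-c))
        key
        (Set.right_mem_Icc.mpr ht)
      simpa [hcdef] using neg_le_neg_iff.mp this
    -- pass to the limit ε → 0
    apply le_of_forall_pos_le_add
    intro ε hε
    have hε' : 0 < min ε ε₀ / 2 := by positivity
    have hlt : min ε ε₀ / 2 < ε₀ := by
      have := min_le_right ε ε₀; linarith
    have := H _ hε' hlt
    have : ℓ / R ≤ f t + min ε ε₀ / 2 := by linarith
    have hmin : min ε ε₀ / 2 ≤ ε := by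
      have := min_le_left ε ε₀; linarith
    linarith
  · -- upper bound
    apply le_of_forall_pos_le_add
    intro ε hε
    have key : ∀ x ∈ Set.Ico (0:ℝ) t, f x = (fun _ : ℝ => ℓ / δ + ε) x →
        w x - v (ℓ / f x) < (0:ℝ) := by
      intro x hx hfx
      simp only at hfx
      set r : ℝ := ℓ / (ℓ / δ + ε) with hrdef
      have hr0 : 0 < r := div_pos hℓ (by linarith)
      have hrδ : r < δ := by
        rw [hrdef]
        calc ℓ / (ℓ / δ + ε) < ℓ / (ℓ / δ) :=
              div_lt_div_of_pos_left hℓ hℓδ (by linarith)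
        _ = δ := by field_simp
      have hvr : v δ < v r :=
        sa ⟨hr0.le, by linarith⟩ ⟨hδ.le, hδρ⟩ hrδ
      have hwx := (hw x hx.1).2
      rw [hfx, ← hrdef]
      linarith
    have := image_le_of_deriv_right_lt_deriv_boundary'
      (f := f) (f' := fun x => w x - v (ℓ / f x))
      (a := 0) (b := t) (B := fun _ => ℓ / δ + ε) (B' := fun _ => 0)
      (hfc t) (hfd t)
      (le_trans hf0.2 (by linarith))
      continuousOn_const
      (fun x _ => hasDerivWithinAt_const x _ (ℓ / δ + ε))
      key
      (Set.right_mem_Icc.mpr ht)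
    simpa using this

/-- **Discrete maximum–minimum principle for the follow-the-leader scheme with boundary
data.**  If the initial gaps of the particles `y₀ < … < y_M` lie in `[ℓ/R, ℓ/δ]`, the
interior particles follow the leader and the leader moves with speed `v(ρ̂)` for some
`ρ̂ ∈ [δ,R]`, then the gaps remain in `[ℓ/R, ℓ/δ]` for all times. -/
theorem stmt9
    -- velocity hypothesis (V1)
    (ρmax vmax : ℝ) (hρmax : 0 < ρmax) (hvmaxpos : 0 < vmax)
    (v v' : ℝ → ℝ)
    (hv_deriv : ∀ r ∈ Set.Icc (0:ℝ) ρmax, HasDerivAt v (v' r) r)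
    (hv'_cont : ContinuousOn v' (Set.Icc (0:ℝ) ρmax))
    (hv'_neg : ∀ r ∈ Set.Icc (0:ℝ) ρmax, v' r < 0)
    (hv_range : ∀ r ∈ Set.Icc (0:ℝ) ρmax, v r ∈ Set.Icc (0:ℝ) vmax)
    (hv0 : v 0 = vmax) (hvρmax : v ρmax = 0)
    -- data
    (δ R ℓ ρhat : ℝ) (hδ : 0 < δ) (hδR : δ ≤ R) (hRρmax : R ≤ ρmax)
    (hℓ : 0 < ℓ) (hρhat : ρhat ∈ Set.Icc δ R)
    -- the particle system
    (M : ℕ) (hM : 1 ≤ M)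
    (y : ℕ → ℝ → ℝ)
    (hODE : ∀ i, i < M → ∀ t, 0 ≤ t →
        HasDerivWithinAt (y i) (v (ℓ / (y (i+1) t - y i t))) (Set.Ici 0) t)
    (hlead : ∀ t, 0 ≤ t → HasDerivWithinAt (y M) (v ρhat) (Set.Ici 0) t)
    (horder : ∀ t, 0 ≤ t → ∀ i, i < M → y i t < y (i+1) t)
    (hgap0 : ∀ i, i < M → ℓ / R ≤ y (i+1) 0 - y i 0 ∧ y (i+1) 0 - y i 0 ≤ ℓ / δ) :
    ∀ t, 0 ≤ t → ∀ i, i < M →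
      ℓ / R ≤ y (i+1) t - y i t ∧ y (i+1) t - y i t ≤ ℓ / δ := by
  have hR : 0 < R := lt_of_lt_of_le hδ hδR
  have hvcont : ContinuousOn v (Set.Icc 0 ρmax) := fun r hr =>
    (hv_deriv r hr).continuousAt.continuousWithinAt
  have sa : StrictAntiOn v (Set.Icc 0 ρmax) := by
    apply strictAntiOn_of_deriv_neg (convex_Icc _ _) hvcont
    intro x hx
    rw [interior_Icc] at hx
    have hx' : x ∈ Set.Icc (0:ℝ) ρmax := ⟨hx.1.le, hx.2.le⟩
    rw [(hv_deriv x hx').deriv]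
    exact hv'_neg x hx'
  have vle : ∀ a b : ℝ, a ∈ Set.Icc (0:ℝ) ρmax → b ∈ Set.Icc (0:ℝ) ρmax →
      a ≤ b → v b ≤ v a := fun a b ha hb hab => sa.antitoneOn ha hb hab
  -- downward induction on M - i
  have main : ∀ n : ℕ, ∀ i, i < M → M - i = n → ∀ t, 0 ≤ t →
      ℓ / R ≤ y (i+1) t - y i t ∧ y (i+1) t - y i t ≤ ℓ / δ := by
    intro n
    induction n with
    | zero => intro i hi h; omega
    | succ n ih =>
      intro i hi h
      by_cases hiM : i + 1 = M
      · -- leader gap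
        apply flKey ρmax vmax hρmax v v' hv_deriv hv'_neg hv_range hvρmax
          δ R ℓ hδ hδR hRρmax hℓ
          (fun s => y (i+1) s - y i s) (fun _ => v ρhat)
        · intro s _
          constructor
          · exact vle ρhat R ⟨by linarith [hρhat.1], le_trans hρhat.2 hRρmax⟩
              ⟨by linarith, hRρmax⟩ hρhat.2
          · exact vle δ ρhat ⟨hδ.le, by linarith⟩
              ⟨by linarith [hρhat.1], le_trans hρhat.2 hRρmax⟩ hρhat.1
        · intro s hs
          have h1 := hlead s hs
          rw [← hiM] at h1
          exact h1.sub (hODE i hi s hs)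
        · exact hgap0 i hi
      · -- interior gap
        have hi1 : i + 1 < M := by omega
        have IH := ih (i+1) hi1 (by omega)
        apply flKey ρmax vmax hρmax v v' hv_deriv hv'_neg hv_range hvρmax
          δ R ℓ hδ hδR hRρmax hℓ
          (fun s => y (i+1) s - y i s)
          (fun s => v (ℓ / (y (i+1+1) s - y (i+1) s)))
        · intro s hs
          obtain ⟨hlo, hhi⟩ := IH s hs
          have hdpos : 0 < y (i+1+1) s - y (i+1) s :=
            lt_of_lt_of_le (div_pos hℓ hR) hlo
          set d := y (i+1+1) s - y (i+1) s
          have hδd : δ ≤ ℓ / d := by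
            calc δ = ℓ / (ℓ / δ) := by field_simp
            _ ≤ ℓ / d := div_le_div_of_nonneg_left hℓ.le hdpos hhi
          have hdR : ℓ / d ≤ R := by
            calc ℓ / d ≤ ℓ / (ℓ / R) := div_le_div_of_nonneg_left hℓ.le (div_pos hℓ hR) hlo
            _ = R := by field_simp
          constructor
          · exact vle (ℓ / d) R ⟨by linarith, le_trans hdR hRρmax⟩
              ⟨by linarith, hRρmax⟩ hdR
          · exact vle δ (ℓ / d) ⟨hδ.le, by linarith [le_trans hδR hRρmax]⟩
              ⟨by linarith, le_trans hdR hRρmax⟩ hδd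
        · intro s hs
          exact (hODE (i+1) hi1 s hs).sub (hODE i hi s hs)
        · exact hgap0 i hi
  intro t ht i hi
  exact main (M - i) i hi rfl t ht
end
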